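/- arXiv:math/0603063 — 3 statements merged into one kernel-verified Lean document; each statement's English description precedes it below -/
import Mathlib

section
/- Let U and V be Banach spaces with normalized 1-unconditional bases (u_i) and (v_i). For an infinite subset N ⊂ ℕ let U^(N) and V^(N) denote the closed linear spans of (u_i)_{i∈N} and (v_i)_{i∈N}. If C ≥ 1 and a Banach space X satisfies C-(V,U)-tree estimates, then X also satisfies C-(V^(N),U^(N))-tree estimates (with respect to the 1-unconditional bases (v_i)_{i∈N} and (u_i)_{i∈N}) for every infinite N ⊂ ℕ. -/
open Filter Topology
open scoped ENNReal

noncomputable section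

/-- A real Banach space is *reflexive* if the canonical inclusion into its double dual is
surjective. -/
def IsReflexiveSpace (X : Type*) [NormedAddCommGroup X] [NormedSpace ℝ X] : Prop :=
  Function.Surjective (NormedSpace.inclusionInDoubleDual ℝ X)

section Sequences

variable {E F V U : Type*}
variable [NormedAddCommGroup E] [NormedSpace ℝ E] [NormedAddCommGroup F] [NormedSpace ℝ F]
variable [NormedAddCommGroup V] [NormedSpace ℝ V] [NormedAddCommGroup U] [NormedSpace ℝ U]

/-- `(f i)` `C`-dominates `(e i)`: `‖∑ aᵢ eᵢ‖ ≤ C ‖∑ aᵢ fᵢ‖` for all finitely supported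
real scalar sequences `a`. -/
def Dominates (C : ℝ) (f : ℕ → F) (e : ℕ → E) : Prop :=
  ∀ a : ℕ →₀ ℝ, ‖a.sum fun i c => c • e i‖ ≤ C * ‖a.sum fun i c => c • f i‖

/-- `(f i)_{i<k}` `C`-dominates `(e i)_{i<k}`. -/
def DominatesFin {k : ℕ} (C : ℝ) (f : Fin k → F) (e : Fin k → E) : Prop :=
  ∀ a : Fin k → ℝ, ‖∑ i, a i • e i‖ ≤ C * ‖∑ i, a i • f i‖

/-- The sequence `(v i)` is normalized. -/
def SeqNormalized (v : ℕ → V) : Prop := ∀ i, ‖v i‖ = 1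

/-- The sequence `(v i)` is 1-unconditional. -/
def SeqUncond (v : ℕ → V) : Prop :=
  ∀ (s : Finset ℕ) (a ε : ℕ → ℝ), (∀ i, |ε i| ≤ 1) →
    ‖∑ i ∈ s, (ε i * a i) • v i‖ ≤ ‖∑ i ∈ s, a i • v i‖

/-- The sequence `(v i)` is 1-spreading. -/
def SeqSpreading (v : ℕ → V) : Prop :=
  ∀ (s : Finset ℕ) (a : ℕ → ℝ) (n : ℕ → ℕ), StrictMono n →
    ‖∑ i ∈ s, a i • v (n i)‖ = ‖∑ i ∈ s, a i • v i‖

/-- The closed linear span of `(v i)` is the whole space. -/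
def SeqTotal (v : ℕ → V) : Prop :=
  (Submodule.span ℝ (Set.range v)).topologicalClosure = ⊤

/-- `(v i)` is a normalized 1-unconditional (Schauder) basis of `V`. -/
def Is1UncondBasis (v : ℕ → V) : Prop :=
  SeqNormalized v ∧ SeqUncond v ∧ SeqTotal v

/-- `(v i)` is a normalized 1-subsymmetric (i.e. 1-unconditional and 1-spreading) basis. -/
def Is1SubsymBasis (v : ℕ → V) : Prop :=
  Is1UncondBasis v ∧ SeqSpreading v

/-- `(b j)` is a block sequence of the basis `(v i)`: each `b j` is a nonzero finite linear
combination of the `v i`'s, and the supports are successive. -/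
def IsBlockSeqOfBasis (v : ℕ → V) (b : ℕ → V) : Prop :=
  ∃ c : ℕ → (ℕ →₀ ℝ),
    (∀ j, b j = (c j).sum fun i r => r • v i) ∧ (∀ j, b j ≠ 0) ∧
    ∀ j, ∀ i ∈ (c j).support, ∀ i' ∈ (c (j + 1)).support, i < i'

/-- The strong right shift property (SRS) of the basis `(v i)`. -/
def HasSRS (v : ℕ → V) : Prop :=
  ∃ c > (0 : ℝ), ∀ (n : ℕ) (a : ℕ →₀ ℝ),
    c * ‖a.sum fun i r => r • v i‖ ≤ ‖a.sum fun i r => r • v (i + n)‖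

/-- The weak left shift property (WLS) of the basis `(v i)`. -/
def HasWLS (v : ℕ → V) : Prop :=
  ∃ d > (0 : ℝ), ∀ m : ℕ, ∃ L : ℕ, m ≤ L ∧ ∀ k ≤ m, ∀ a : ℕ →₀ ℝ, (∀ i ≤ L, a i = 0) →
    ∀ b : ℕ →₀ ℝ, (∀ j, b j = a (j + k)) →
      d * ‖a.sum fun i r => r • v i‖ ≤ ‖b.sum fun i r => r • v i‖

end Sequences

section Trees

variable {X V U : Type*} [NormedAddCommGroup X] [NormedSpace ℝ X]
variable [NormedAddCommGroup V] [NormedSpace ℝ V] [NormedAddCommGroup U] [NormedSpace ℝ U]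

/-- The branch of the tree `(x_α)` (indexed by finite strictly increasing lists of naturals)
along the strictly increasing sequence `n`. -/
def TreeBranch (x : List ℕ → X) (n : ℕ → ℕ) : ℕ → X := fun i => x ((List.range (i + 1)).map n)

/-- The branch of a tree of length `k` along the strictly increasing sequence `n`. -/
def TreeBranchFin (k : ℕ) (x : List ℕ → X) (n : ℕ → ℕ) : Fin k → X :=
  fun i => x ((List.range ((i : ℕ) + 1)).map n)

/-- `x` is a normalized weakly null tree (of infinite length): every member indexed by a
strictly increasing list has norm one, and every node is weakly null. -/
def IsNWNTree (x : List ℕ → X) : Prop :=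
  (∀ l : List ℕ, l.Pairwise (· < ·) → ‖x l‖ = 1) ∧
  ∀ l : List ℕ, l.Pairwise (· < ·) → ∀ f : StrongDual ℝ X,
    Tendsto (fun m => f (x (l ++ [m]))) atTop (nhds 0)

/-- `x` is a normalized weakly null tree of length `k`. -/
def IsNWNTreeLen (k : ℕ) (x : List ℕ → X) : Prop :=
  (∀ l : List ℕ, l.Pairwise (· < ·) → l.length ≤ k → ‖x l‖ = 1) ∧
  ∀ l : List ℕ, l.Pairwise (· < ·) → l.length < k → ∀ f : StrongDual ℝ X,
    Tendsto (fun m => f (x (l ++ [m]))) atTop (nhds 0)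

/-- `X` satisfies `C`-`V`-lower tree estimates w.r.t. the basis `(v i)`. -/
def LowerTreeEst (X : Type*) [NormedAddCommGroup X] [NormedSpace ℝ X]
    {V : Type*} [NormedAddCommGroup V] [NormedSpace ℝ V] (C : ℝ) (v : ℕ → V) : Prop :=
  ∀ x : List ℕ → X, IsNWNTree x → ∃ n : ℕ → ℕ, StrictMono n ∧ Dominates C (TreeBranch x n) v

/-- `X` satisfies `C`-`U`-upper tree estimates w.r.t. the basis `(u i)`. -/
def UpperTreeEst (X : Type*) [NormedAddCommGroup X] [NormedSpace ℝ X]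
    {U : Type*} [NormedAddCommGroup U] [NormedSpace ℝ U] (C : ℝ) (u : ℕ → U) : Prop :=
  ∀ x : List ℕ → X, IsNWNTree x → ∃ n : ℕ → ℕ, StrictMono n ∧ Dominates C u (TreeBranch x n)

/-- `X` satisfies asymptotic `C`-`V`-lower tree estimates. -/
def AsympLowerTreeEst (X : Type*) [NormedAddCommGroup X] [NormedSpace ℝ X]
    {V : Type*} [NormedAddCommGroup V] [NormedSpace ℝ V] (C : ℝ) (v : ℕ → V) : Prop :=
  ∀ (k : ℕ) (x : List ℕ → X), IsNWNTreeLen k x →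
    ∃ n : ℕ → ℕ, StrictMono n ∧ DominatesFin C (TreeBranchFin k x n) fun i : Fin k => v i

/-- `X` satisfies asymptotic `C`-`U`-upper tree estimates. -/
def AsympUpperTreeEst (X : Type*) [NormedAddCommGroup X] [NormedSpace ℝ X]
    {U : Type*} [NormedAddCommGroup U] [NormedSpace ℝ U] (C : ℝ) (u : ℕ → U) : Prop :=
  ∀ (k : ℕ) (x : List ℕ → X), IsNWNTreeLen k x →
    ∃ n : ℕ → ℕ, StrictMono n ∧ DominatesFin C (fun i : Fin k => u i) (TreeBranchFin k x n)

end Trees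

/-- A finite-dimensional decomposition (FDD) of `Z`: a sequence of finite-dimensional
subspaces together with the corresponding continuous coordinate projections, such that every
`z ∈ Z` is the norm-convergent sum of its coordinates. -/
structure FDD (Z : Type*) [NormedAddCommGroup Z] [NormedSpace ℝ Z] where
  E : ℕ → Submodule ℝ Z
  finDim : ∀ n, FiniteDimensional ℝ (E n)
  proj : ℕ → Z →L[ℝ] Z
  mem_proj : ∀ n z, proj n z ∈ E n
  proj_self : ∀ n, ∀ z ∈ E n, proj n z = z
  proj_other : ∀ m n, m ≠ n → ∀ z ∈ E n, proj m z = 0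
  tendsto_partialSum :
    ∀ z : Z, Tendsto (fun N => ∑ n ∈ Finset.range N, proj n z) atTop (nhds z)

section FDDdefs

variable {Z V U : Type*} [NormedAddCommGroup Z] [NormedSpace ℝ Z]
variable [NormedAddCommGroup V] [NormedSpace ℝ V] [NormedAddCommGroup U] [NormedSpace ℝ U]

/-- The support of `z` with respect to the FDD `F`. -/
def FDD.supp (F : FDD Z) (z : Z) : Set ℕ := {i | F.proj i z ≠ 0}

/-- `(z j)` is a block sequence of the FDD `F`. -/
def FDD.IsBlockSeq (F : FDD Z) (z : ℕ → Z) : Prop :=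
  (∀ j, z j ≠ 0 ∧ (F.supp (z j)).Finite) ∧
  ∀ j, ∀ i ∈ F.supp (z j), ∀ i' ∈ F.supp (z (j + 1)), i < i'

/-- The FDD `F` is shrinking: every bounded block sequence is weakly null. -/
def FDD.Shrinking (F : FDD Z) : Prop :=
  ∀ z : ℕ → Z, F.IsBlockSeq z → (∃ M : ℝ, ∀ j, ‖z j‖ ≤ M) →
    ∀ f : StrongDual ℝ Z, Tendsto (fun j => f (z j)) atTop (nhds 0)

/-- The projection onto the coordinates in `[a,b)`. -/
def FDD.projIco (F : FDD Z) (a b : ℕ) : Z →L[ℝ] Z := ∑ i ∈ Finset.Ico a b, F.proj i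

/-- The FDD `F` is bimonotone. -/
def FDD.Bimonotone (F : FDD Z) : Prop := ∀ (a b : ℕ) (z : Z), ‖F.projIco a b z‖ ≤ ‖z‖

/-- `G` is a blocking of the FDD `F`. -/
def FDD.IsBlocking (G F : FDD Z) : Prop :=
  ∃ k : ℕ → ℕ, k 0 = 0 ∧ StrictMono k ∧
    ∀ n, (G.proj n : Z →L[ℝ] Z) = ∑ i ∈ Finset.Ico (k n) (k (n + 1)), F.proj i

/-- The FDD `F` satisfies `C`-`V`-lower estimates in `Z`. -/
def FDD.LowerEst (F : FDD Z) (C : ℝ) (v : ℕ → V) : Prop :=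
  ∀ z : ℕ → Z, F.IsBlockSeq z → (∀ j, ‖z j‖ = 1) → Dominates C z v

/-- The FDD `F` satisfies `C`-`U`-upper estimates in `Z`. -/
def FDD.UpperEst (F : FDD Z) (C : ℝ) (u : ℕ → U) : Prop :=
  ∀ z : ℕ → Z, F.IsBlockSeq z → (∀ j, ‖z j‖ = 1) → Dominates C u z

/-- `(x i)_{i<n}` is a block sequence of `(E i)_{i≥n}` (of length `n`) of the FDD `F`. -/
def FDD.IsAsympBlock (F : FDD Z) (n : ℕ) (x : Fin n → Z) : Prop :=
  (∀ i, x i ≠ 0 ∧ (F.supp (x i)).Finite ∧ ∀ j ∈ F.supp (x i), n ≤ j) ∧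
  ∀ i i' : Fin n, i < i' → ∀ j ∈ F.supp (x i), ∀ j' ∈ F.supp (x i'), j < j'

/-- The FDD `F` satisfies asymptotic `C`-`V`-lower estimates in `Z`. -/
def FDD.AsympLowerEst (F : FDD Z) (C : ℝ) (v : ℕ → V) : Prop :=
  ∀ (n : ℕ) (x : Fin n → Z), F.IsAsympBlock n x →
    C⁻¹ * ‖∑ i, ‖x i‖ • v (i : ℕ)‖ ≤ ‖∑ i, x i‖

/-- The FDD `F` satisfies asymptotic `C`-`U`-upper estimates in `Z`. -/
def FDD.AsympUpperEst (F : FDD Z) (C : ℝ) (u : ℕ → U) : Prop :=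
  ∀ (n : ℕ) (x : Fin n → Z), F.IsAsympBlock n x →
    ‖∑ i, x i‖ ≤ C * ‖∑ i, ‖x i‖ • u (i : ℕ)‖

/-- The support of a functional `f` with respect to the dual FDD `(E_i^*)`. -/
def FDD.dualSupp (F : FDD Z) (f : StrongDual ℝ Z) : Set ℕ :=
  {i | f.comp (F.proj i) ≠ 0}

/-- `(g j)` is a block sequence of the dual FDD `(E_i^*)` in `Z^(*)`. -/
def FDD.IsDualBlockSeq (F : FDD Z) (g : ℕ → StrongDual ℝ Z) : Prop :=
  (∀ j, g j ≠ 0 ∧ (F.dualSupp (g j)).Finite) ∧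
  ∀ j, ∀ i ∈ F.dualSupp (g j), ∀ i' ∈ F.dualSupp (g (j + 1)), i < i'

/-- The space `c₀₀(⊕ E_i)` of finitely supported vectors of the FDD `F`. -/
def FDD.finVectors (F : FDD Z) : Submodule ℝ Z where
  carrier := {z | (F.supp z).Finite}
  zero_mem' := by
    refine Set.Finite.subset Set.finite_empty ?_
    intro i hi
    simp only [FDD.supp, Set.mem_setOf_eq, map_zero, ne_eq, not_true_eq_false] at hi
  add_mem' := by
    intro a b ha hb
    refine Set.Finite.subset (Set.Finite.union ha hb) ?_
    intro i hi
    simp only [FDD.supp, Set.mem_setOf_eq, Set.mem_union] at hi ⊢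
    by_contra hcon
    push_neg at hcon
    rw [map_add, hcon.1, hcon.2, add_zero] at hi
    exact hi rfl
  smul_mem' := by
    intro c a ha
    refine Set.Finite.subset ha ?_
    intro i hi
    simp only [FDD.supp, Set.mem_setOf_eq] at hi ⊢
    intro h0
    rw [map_smul, h0, smul_zero] at hi
    exact hi rfl

/-- The quantity `‖∑_{j<k} ‖P_{[n_j, n_{j+1})} z‖ v_j‖` appearing in the definition of the
norm of `Z_V(E)`. -/
def zvBlockSum (F : FDD Z) (v : ℕ → V) (z : Z) (k : ℕ) (n : ℕ → ℕ) : ℝ :=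
  ‖∑ j ∈ Finset.range k, ‖F.projIco (n j) (n (j + 1)) z‖ • v j‖

/-- Admissibility of the data `(k, n)` in the definition of the norm of `Z_V(E)`. -/
def IsZVAdmissible (k : ℕ) (n : ℕ → ℕ) : Prop := 1 ≤ k ∧ n 0 = 0 ∧ StrictMono n

/-- The norm of the space `Z_V(E)`. -/
def zvNorm (F : FDD Z) (v : ℕ → V) (z : Z) : ℝ :=
  sSup {r | ∃ k n, IsZVAdmissible k n ∧ r = zvBlockSum F v z k n}

end FDDdefs

/-- A bundled Banach space. -/
structure BanachPack where
  carrier : Type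
  [grp : NormedAddCommGroup carrier]
  [nsp : NormedSpace ℝ carrier]
  [cpl : CompleteSpace carrier]

attribute [instance] BanachPack.grp BanachPack.nsp BanachPack.cpl

/-- A bundled Banach space with an FDD. -/
structure BanachFDDPack where
  carrier : Type
  [grp : NormedAddCommGroup carrier]
  [nsp : NormedSpace ℝ carrier]
  [cpl : CompleteSpace carrier]
  fdd : FDD carrier

attribute [instance] BanachFDDPack.grp BanachFDDPack.nsp BanachFDDPack.cpl

section Tsirelson

variable {V : Type*} [NormedAddCommGroup V] [NormedSpace ℝ V]

/-- The auxiliary norms `‖·‖_{ℓ, T(V,γ)}` on `c₀₀ = ℕ →₀ ℝ` used in the definition of the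
Tsirelson space `T(V,γ)` associated to `V` and `γ`. -/
def tsNormAux (v : ℕ → V) (γ : ℝ) : ℕ → (ℕ →₀ ℝ) → ℝ
  | 0 => fun x => ⨆ i, |x i|
  | ℓ + 1 => fun x =>
      max (tsNormAux v γ ℓ x)
        (sSup {r | ∃ (n : ℕ) (A : ℕ → Finset ℕ), 1 ≤ n ∧
          (∀ i < n, ∀ a ∈ A i, n ≤ a) ∧
          (∀ i j, i < j → j < n → ∀ a ∈ A i, ∀ b ∈ A j, a < b) ∧
          r = γ * ‖∑ i ∈ Finset.range n, tsNormAux v γ ℓ (x.filter (· ∈ A i)) • v i‖})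

/-- The norm of the Tsirelson space `T(V,γ)` on `c₀₀ = ℕ →₀ ℝ`. -/
def tsNorm (v : ℕ → V) (γ : ℝ) (x : ℕ →₀ ℝ) : ℝ := ⨆ ℓ, tsNormAux v γ ℓ x

end Tsirelson

/-- The dual norm, on `c₀₀ = ℕ →₀ ℝ`, of a norm `N` on `c₀₀`. -/
def dualNormCoo (N : (ℕ →₀ ℝ) → ℝ) (b : ℕ →₀ ℝ) : ℝ :=
  sSup {r | ∃ x : ℕ →₀ ℝ, N x ≤ 1 ∧ r = x.sum fun i c => c * b i}

/-- The `ℓ_p` norm of a finite real sequence (`p = ∞` gives the max norm). -/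
def lpSum (p : ℝ≥0∞) {k : ℕ} (a : Fin k → ℝ) : ℝ :=
  if p = ∞ then ⨆ i, |a i| else (∑ i, |a i| ^ p.toReal) ^ (1 / p.toReal)


section LpEstimates

variable {X Z : Type*} [NormedAddCommGroup X] [NormedSpace ℝ X]
variable [NormedAddCommGroup Z] [NormedSpace ℝ Z]

/-- `X` satisfies asymptotic `C`-`ℓ_p`-lower tree estimates. -/
def AsympLpLowerTreeEst (X : Type*) [NormedAddCommGroup X] [NormedSpace ℝ X]
    (C : ℝ) (p : ℝ≥0∞) : Prop :=
  ∀ (k : ℕ) (x : List ℕ → X), IsNWNTreeLen k x →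
    ∃ n : ℕ → ℕ, StrictMono n ∧ ∀ a : Fin k → ℝ,
      C⁻¹ * lpSum p a ≤ ‖∑ i, a i • TreeBranchFin k x n i‖

/-- `X` satisfies asymptotic `C`-`ℓ_q`-upper tree estimates. -/
def AsympLpUpperTreeEst (X : Type*) [NormedAddCommGroup X] [NormedSpace ℝ X]
    (C : ℝ) (q : ℝ≥0∞) : Prop :=
  ∀ (k : ℕ) (x : List ℕ → X), IsNWNTreeLen k x →
    ∃ n : ℕ → ℕ, StrictMono n ∧ ∀ a : Fin k → ℝ,
      ‖∑ i, a i • TreeBranchFin k x n i‖ ≤ C * lpSum q a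

/-- The FDD `F` satisfies asymptotic `C`-`ℓ_p`-lower estimates. -/
def FDD.AsympLpLowerEst (F : FDD Z) (C : ℝ) (p : ℝ≥0∞) : Prop :=
  ∀ (n : ℕ) (x : Fin n → Z), F.IsAsympBlock n x →
    C⁻¹ * lpSum p (fun i => ‖x i‖) ≤ ‖∑ i, x i‖

/-- The FDD `F` satisfies asymptotic `C`-`ℓ_q`-upper estimates. -/
def FDD.AsympLpUpperEst (F : FDD Z) (C : ℝ) (q : ℝ≥0∞) : Prop :=
  ∀ (n : ℕ) (x : Fin n → Z), F.IsAsympBlock n x →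
    ‖∑ i, x i‖ ≤ C * lpSum q (fun i => ‖x i‖)

end LpEstimates

end


section Statement0Aux

variable {X : Type*} [NormedAddCommGroup X] [NormedSpace ℝ X]

/-- Number of `i` with `e i < k`, for strictly monotone `e`. -/
def stmt0cnt (e : ℕ → ℕ) (he : StrictMono e) (k : ℕ) : ℕ :=
  Nat.find (⟨k, he.le_apply⟩ : ∃ i, k ≤ e i)

lemma stmt0cnt_lt_iff (e : ℕ → ℕ) (he : StrictMono e) (k i : ℕ) :
    i < stmt0cnt e he k ↔ e i < k := by
  constructor
  · intro h
    have := Nat.find_min (⟨k, he.le_apply⟩ : ∃ i, k ≤ e i) h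
    omega
  · intro h
    by_contra hc
    push_neg at hc
    have h1 : k ≤ e (stmt0cnt e he k) := Nat.find_spec (⟨k, he.le_apply⟩ : ∃ i, k ≤ e i)
    have h2 := he.monotone hc
    omega

lemma stmt0_getD_map_range (n : ℕ → ℕ) {k p : ℕ} (hp : p < k) :
    ((List.range k).map n).getD p 0 = n p := by
  rw [List.getD_eq_getElem _ _ (by simpa using hp)]
  simp [hp]

lemma stmt0_getD_lt {l : List ℕ} (hl : l.Pairwise (· < ·)) {p q : ℕ} (hpq : p < q)
    (hq : q < l.length) : l.getD p 0 < l.getD q 0 := by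
  rw [List.getD_eq_getElem _ _ (by omega), List.getD_eq_getElem _ _ hq]
  exact List.SortedLT.strictMono_get hl.sortedLT (by simpa using hpq)

end Statement0Aux

section Statement0Tree

variable {X : Type*} [NormedAddCommGroup X] [NormedSpace ℝ X]

/-- Auxiliary tree used to transfer tree estimates to a subsequence of the basis. -/
def stmt0tree (e : ℕ → ℕ) (he : StrictMono e) (x : List ℕ → X) : List ℕ → X := fun l =>
  if l.length = 0 then x []
  else if e (stmt0cnt e he l.length - 1) + 1 = l.length then
    x ((List.range (stmt0cnt e he l.length)).map fun i => l.getD (e i) 0)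
  else x [l.getLastD 0]

lemma stmt0_sel_sorted (e : ℕ → ℕ) (he : StrictMono e) {l : List ℕ}
    (hl : l.Pairwise (· < ·)) {c : ℕ} (hc : ∀ j < c, e j < l.length) :
    ((List.range c).map fun i => l.getD (e i) 0).Pairwise (· < ·) := by
  rw [List.pairwise_map]
  refine List.Pairwise.imp_of_mem ?_ (List.pairwise_lt_range (n := c))
  intro a b ha hb hab
  exact stmt0_getD_lt hl (he hab) (hc b (List.mem_range.mp hb))

end Statement0Tree

section Statement0Main

variable {X : Type*} [NormedAddCommGroup X] [NormedSpace ℝ X]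

lemma stmt0_branch (e : ℕ → ℕ) (he : StrictMono e) (x : List ℕ → X) (n : ℕ → ℕ) (i : ℕ) :
    TreeBranch (stmt0tree e he x) n (e i) = TreeBranch x (n ∘ e) i := by
  unfold TreeBranch stmt0tree
  have hlen : ((List.range (e i + 1)).map n).length = e i + 1 := by simp
  have hcnt : stmt0cnt e he (e i + 1) = i + 1 := by
    have h1 : i < stmt0cnt e he (e i + 1) := (stmt0cnt_lt_iff e he _ _).mpr (by omega)
    have h2 : ¬ (i + 1 < stmt0cnt e he (e i + 1)) := by
      rw [stmt0cnt_lt_iff]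
      have : e i < e (i + 1) := he (by omega)
      omega
    omega
  rw [hlen] at *
  simp only [hlen, hcnt]
  rw [if_neg (by omega), if_pos (by rw [Nat.add_sub_cancel])]
  congr 1
  apply List.map_congr_left
  intro j hj
  rw [List.mem_range] at hj
  have hej : e j < e i + 1 := by
    rcases Nat.lt_succ_iff_lt_or_eq.mp hj with h | h
    · exact (he h).trans (Nat.lt_succ_self _)
    · subst h; omega
  rw [stmt0_getD_map_range n hej]
  rfl

lemma stmt0_nwn (e : ℕ → ℕ) (he : StrictMono e) (x : List ℕ → X) (hx : IsNWNTree x) :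
    IsNWNTree (stmt0tree e he x) := by
  obtain ⟨hx1, hx2⟩ := hx
  constructor
  · intro l hl
    unfold stmt0tree
    split
    · exact hx1 [] (by simp)
    · split
      · rename_i h0 hgood
        refine hx1 _ (stmt0_sel_sorted e he hl ?_)
        intro j hj
        have := he.monotone (by omega : j ≤ stmt0cnt e he l.length - 1)
        omega
      · exact hx1 _ (by simp)
  · intro l hl f
    have hlen : ∀ m : ℕ, (l ++ [m]).length = l.length + 1 := by simp
    set L := l.length with hL
    by_cases hgood : e (stmt0cnt e he (L + 1) - 1) + 1 = L + 1
    · -- good case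
      have hc1 : 1 ≤ stmt0cnt e he (L + 1) := by
        by_contra h
        have h0 : stmt0cnt e he (L + 1) = 0 := by omega
        rw [h0, show (0:ℕ) - 1 = 0 from rfl] at hgood
        have : 0 < stmt0cnt e he (L + 1) := (stmt0cnt_lt_iff e he _ _).mpr (by omega)
        omega
      set c := stmt0cnt e he (L + 1) with hcdef
      have heL : e (c - 1) = L := by omega
      set l₀ : List ℕ := (List.range (c - 1)).map fun i => l.getD (e i) 0 with hl₀
      have hsel : ∀ m : ℕ, stmt0tree e he x (l ++ [m]) = x (l₀ ++ [m]) := by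
        intro m
        unfold stmt0tree
        rw [hlen m]
        rw [if_neg (by omega), if_pos hgood]
        congr 1
        rw [← hcdef]
        have hcs : c = (c - 1) + 1 := by omega
        rw [hcs, List.range_succ, List.map_append]
        congr 1
        · apply List.map_congr_left
          intro j hj
          rw [List.mem_range] at hj
          have hej : e j < L := heL ▸ he (by omega)
          rw [List.getD_append _ _ _ _ (by omega)]
        · simp only [List.map_cons, List.map_nil]
          congr 1
          rw [heL, List.getD_eq_getElem _ _ (by rw [hlen]; omega)]
          simp [hL]
      have hl₀s : l₀.Pairwise (· < ·) := by
        refine stmt0_sel_sorted e he hl ?_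
        intro j hj
        have : e j < e (c - 1) := he (by omega)
        omega
      have := hx2 l₀ hl₀s f
      refine this.congr ?_
      intro m
      rw [hsel m]
    · -- bad case: node is the root node of x
      have hsel : ∀ m : ℕ, stmt0tree e he x (l ++ [m]) = x [m] := by
        intro m
        unfold stmt0tree
        rw [hlen m]
        rw [if_neg (by omega), if_neg hgood]
        congr 1
        rw [List.getLastD_concat]
      have := hx2 [] (by simp) f
      refine this.congr ?_
      intro m
      rw [hsel m]
      rfl

end Statement0Main


/-- If `X` satisfies `C`-`(V,U)`-tree estimates then it satisfies
`C`-`(V^(N),U^(N))`-tree estimates for every infinite `N ⊆ ℕ` (encoded by a strictly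
increasing enumeration `e : ℕ → ℕ`). -/
theorem statement0 {X U V : Type*}
    [NormedAddCommGroup X] [NormedSpace ℝ X] [CompleteSpace X]
    [NormedAddCommGroup U] [NormedSpace ℝ U] [CompleteSpace U]
    [NormedAddCommGroup V] [NormedSpace ℝ V] [CompleteSpace V]
    (u : ℕ → U) (v : ℕ → V) (hu : Is1UncondBasis u) (hv : Is1UncondBasis v)
    (C : ℝ) (hC : 1 ≤ C)
    (hlow : LowerTreeEst X C v) (hup : UpperTreeEst X C u)
    (e : ℕ → ℕ) (he : StrictMono e) :
    LowerTreeEst X C (fun i => v (e i)) ∧ UpperTreeEst X C (fun i => u (e i)) := by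
  constructor
  · intro x hx
    obtain ⟨n, hn, hdom⟩ := hlow (stmt0tree e he x) (stmt0_nwn e he x hx)
    refine ⟨n ∘ e, hn.comp he, ?_⟩
    intro a
    have hb := hdom (Finsupp.embDomain ⟨e, he.injective⟩ a)
    rw [Finsupp.sum_embDomain, Finsupp.sum_embDomain] at hb
    simp only [Function.Embedding.coeFn_mk, stmt0_branch e he x n] at hb
    exact hb
  · intro x hx
    obtain ⟨n, hn, hdom⟩ := hup (stmt0tree e he x) (stmt0_nwn e he x hx)
    refine ⟨n ∘ e, hn.comp he, ?_⟩
    intro a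
    have hb := hdom (Finsupp.embDomain ⟨e, he.injective⟩ a)
    rw [Finsupp.sum_embDomain, Finsupp.sum_embDomain] at hb
    simp only [Function.Embedding.coeFn_mk, stmt0_branch e he x n] at hb
    exact hb
end

section
/- Let U and V be Banach spaces with normalized 1-unconditional bases (u_i) and (v_i). Assume that X is a Banach space with the property that every normalized weakly null tree in X has a branch which dominates (v_i) and a branch which is dominated by (u_i). Then there exists a single constant C ≥ 1 such that X satisfies C-(V,U)-tree estimates. -/
open Filter Topology
open scoped ENNReal

/-! ### Auxiliary machinery for Statement 1 -/

noncomputable section Statement1Aux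

namespace S1

open Filter Topology List

variable {X V : Type*} [NormedAddCommGroup X] [NormedSpace ℝ X]
variable [NormedAddCommGroup V] [NormedSpace ℝ V]

/-- Finitely supported linear combination. -/
def Sm (a : ℕ →₀ ℝ) (w : ℕ → X) : X := a.sum fun i c => c • w i

lemma Sm_def (a : ℕ →₀ ℝ) (w : ℕ → X) : Sm a w = ∑ i ∈ a.support, a i • w i := rfl

lemma Sm_congr {a : ℕ →₀ ℝ} {w w' : ℕ → X} (h : ∀ i ∈ a.support, w i = w' i) :
    Sm a w = Sm a w' := Finset.sum_congr rfl fun i hi => by simp only [h i hi]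

lemma Sm_single (d : ℕ) (c : ℝ) (w : ℕ → X) : Sm (Finsupp.single d c) w = c • w d :=
  Finsupp.sum_single_index (by simp)

lemma Sm_add (a b : ℕ →₀ ℝ) (w : ℕ → X) : Sm (a + b) w = Sm a w + Sm b w :=
  Finsupp.sum_add_index' (by simp) (fun i c₁ c₂ => add_smul c₁ c₂ (w i))

lemma Sm_erase (a : ℕ →₀ ℝ) (w : ℕ → X) (d : ℕ) :
    Sm (a.erase d) w = Sm a w - a d • w d := by
  have h : Sm (a.erase d) w + Sm (Finsupp.single d (a d)) w = Sm a w := by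
    rw [← Sm_add, Finsupp.erase_add_single]
  rw [Sm_single] at h
  exact eq_sub_of_add_eq h

/-- Coordinate functionals of a normalized 1-unconditional sequence are bounded by 1. -/
lemma coord_le {v : ℕ → V} (hn : SeqNormalized v) (hu : SeqUncond v) (a : ℕ →₀ ℝ) (j : ℕ) :
    |a j| ≤ ‖Sm a v‖ := by
  by_cases hj : j ∈ a.support
  · have h := hu a.support a (fun i => if i = j then 1 else 0)
      (fun i => by by_cases hij : i = j <;> simp [hij])
    have hL : ∑ i ∈ a.support, ((if i = j then (1:ℝ) else 0) * a i) • v i = a j • v j := by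
      rw [Finset.sum_eq_single j]
      · simp
      · intro b _ hb; simp [hb]
      · intro hj'; exact absurd hj hj'
    rw [hL] at h
    calc |a j| = ‖a j • v j‖ := by
          rw [norm_smul, hn j, Real.norm_eq_abs, mul_one]
      _ ≤ ‖∑ i ∈ a.support, a i • v i‖ := h
      _ = ‖Sm a v‖ := rfl
  · rw [Finsupp.notMem_support_iff.mp hj]
    simpa using norm_nonneg (Sm a v)

/-- Erasing a coordinate does not increase the norm, for 1-unconditional sequences. -/
lemma erase_le {v : ℕ → V} (hu : SeqUncond v) (a : ℕ →₀ ℝ) (d : ℕ) :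
    ‖Sm (a.erase d) v‖ ≤ ‖Sm a v‖ := by
  have h := hu a.support a (fun i => if i = d then 0 else 1)
    (fun i => by by_cases hid : i = d <;> simp [hid])
  have hL : ∑ i ∈ a.support, ((if i = d then (0:ℝ) else 1) * a i) • v i
      = Sm (a.erase d) v := by
    rw [Sm_def]
    rw [Finsupp.support_erase]
    rw [← Finset.sum_erase (a.support) (a := d) (f := fun i => ((if i = d then (0:ℝ) else 1) * a i) • v i) (by simp)]
    refine Finset.sum_congr rfl fun i hi => ?_
    have hid : i ≠ d := Finset.ne_of_mem_erase hi
    rw [Finsupp.erase_ne hid]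
    simp [hid]
  rw [hL] at h
  exact h

lemma dominates_mono {E F : Type*} [NormedAddCommGroup E] [NormedSpace ℝ E]
    [NormedAddCommGroup F] [NormedSpace ℝ F] {C C' : ℝ} {f : ℕ → F} {e : ℕ → E}
    (hC : C ≤ C') (h : Dominates C f e) : Dominates C' f e := fun a =>
  (h a).trans (mul_le_mul_of_nonneg_right hC (norm_nonneg _))

/-- The list `[n 0, …, n (j-1)]`. -/
def pfx (n : ℕ → ℕ) (j : ℕ) : List ℕ := (List.range j).map n

@[simp] lemma pfx_zero (n : ℕ → ℕ) : pfx n 0 = [] := rfl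

lemma pfx_succ (n : ℕ → ℕ) (j : ℕ) : pfx n (j+1) = pfx n j ++ [n j] := by
  simp [pfx, List.range_succ]

@[simp] lemma pfx_length (n : ℕ → ℕ) (j : ℕ) : (pfx n j).length = j := by simp [pfx]

lemma pfx_take (n : ℕ → ℕ) (j L : ℕ) (h : j ≤ L) : (pfx n L).take j = pfx n j := by
  simp [pfx, ← List.map_take, List.take_range, Nat.min_eq_left h]

lemma pfx_sorted {n : ℕ → ℕ} (hn : StrictMono n) (j : ℕ) : (pfx n j).Pairwise (· < ·) :=
  List.Pairwise.map n (fun _ _ hab => hn hab) (List.pairwise_lt_range (n := j))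

lemma treeBranch_eq_pfx (x : List ℕ → X) (n : ℕ → ℕ) (i : ℕ) :
    TreeBranch x n i = x (pfx n (i+1)) := rfl

lemma branch_norm {x : List ℕ → X} (hx : IsNWNTree x) {n : ℕ → ℕ} (hn : StrictMono n)
    (i : ℕ) : ‖TreeBranch x n i‖ = 1 := hx.1 _ (pfx_sorted hn (i+1))


/-! #### Pruning a tree against finitely many functionals -/

section Prune

variable (x : List ℕ → X) (d : ℕ) (ε : ℝ)

/-- A norming functional for `x q`. -/
def Fn (q : List ℕ) : StrongDual ℝ X := (exists_dual_vector'' ℝ (x q)).choose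

lemma Fn_norm (q : List ℕ) : ‖Fn x q‖ ≤ 1 := (exists_dual_vector'' ℝ (x q)).choose_spec.1

lemma Fn_app (q : List ℕ) : Fn x q (x q) = ‖x q‖ := by
  have := (exists_dual_vector'' ℝ (x q)).choose_spec.2
  exact_mod_cast this

open scoped Classical in
def Mb (r : List ℕ) : ℕ :=
  (r.headI + 1) ⊔
    (if h : ∃ M : ℕ, ∀ m, M ≤ m →
        |Fn x ((r.reverse).take (d+1)) (x (r.reverse ++ [m]))| ≤ ε * (2⁻¹:ℝ)^(r.length)
      then h.choose else 0)

lemma Mb_ge_head (r : List ℕ) : r.headI + 1 ≤ Mb x d ε r := le_max_left _ _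

/-- The pruned reversed prefixes. -/
def prev : List ℕ → List ℕ
  | [] => []
  | m :: r => (Mb x d ε (prev r) + m) :: prev r

/-- The pruning map on (forward) lists. -/
def psi (l : List ℕ) : List ℕ := (prev x d ε l.reverse).reverse

@[simp] lemma psi_nil : psi x d ε [] = [] := rfl

lemma psi_concat (l : List ℕ) (m : ℕ) :
    psi x d ε (l ++ [m]) = psi x d ε l ++ [Mb x d ε (prev x d ε l.reverse) + m] := by
  simp [psi, prev]

lemma prev_chain : ∀ r : List ℕ, List.IsChain (· > ·) (prev x d ε r)
  | [] => List.isChain_nil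
  | m :: r => by
      rw [prev, List.isChain_cons]
      refine ⟨fun b hb => ?_, prev_chain r⟩
      have hbI : (prev x d ε r).headI = b := by
        cases hpr : prev x d ε r with
        | nil => simp [hpr] at hb
        | cons c t =>
            simp only [hpr, List.head?_cons, Option.mem_some_iff] at hb
            simp [hb]
      have := Mb_ge_head x d ε (prev x d ε r)
      omega

lemma psi_sorted (l : List ℕ) : (psi x d ε l).Pairwise (· < ·) := by
  have h1 : List.Pairwise (· > ·) (prev x d ε l.reverse) :=
    List.isChain_iff_pairwise.mp (prev_chain x d ε l.reverse)
  exact List.pairwise_reverse.mpr h1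

lemma prev_length : ∀ r : List ℕ, (prev x d ε r).length = r.length
  | [] => rfl
  | m :: r => by rw [prev]; simp [prev_length r]

@[simp] lemma psi_length (l : List ℕ) : (psi x d ε l).length = l.length := by
  simp [psi, prev_length]

/-- The pruned tree. -/
def prTree : List ℕ → X := fun l => x (psi x d ε l)

lemma Mb_spec {x : List ℕ → X} (hx : IsNWNTree x) {ε : ℝ} (hε : 0 < ε) (d : ℕ)
    (r : List ℕ) (hr : (r.reverse).Pairwise (· < ·)) (k : ℕ) :
    |Fn x ((r.reverse).take (d+1)) (x (r.reverse ++ [Mb x d ε r + k]))|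
      ≤ ε * (2⁻¹:ℝ)^(r.length) := by
  have hten := hx.2 r.reverse hr (Fn x ((r.reverse).take (d+1)))
  have hball : ∃ M : ℕ, ∀ m, M ≤ m →
      |Fn x ((r.reverse).take (d+1)) (x (r.reverse ++ [m]))| ≤ ε * (2⁻¹:ℝ)^(r.length) := by
    have hpos : 0 < ε * (2⁻¹:ℝ)^(r.length) := by positivity
    have hev := hten.eventually (Metric.closedBall_mem_nhds (0:ℝ) hpos)
    rw [Filter.eventually_atTop] at hev
    obtain ⟨M, hM⟩ := hev
    refine ⟨M, fun m hm => ?_⟩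
    have := hM m hm
    simpa [Real.dist_eq] using this
  have hMb : hball.choose ≤ Mb x d ε r := by
    rw [Mb, dif_pos hball]
    exact le_max_right _ _
  exact hball.choose_spec _ (le_trans hMb (Nat.le_add_right _ _))

end Prune


lemma prev_pfx_head (x : List ℕ → X) (d : ℕ) (ε : ℝ) (n : ℕ → ℕ) (j : ℕ) :
    (prev x d ε (pfx n (j+1)).reverse).headI
      = Mb x d ε (prev x d ε (pfx n j).reverse) + n j := by
  rw [pfx_succ]
  simp [prev]

lemma psi_pfx (x : List ℕ → X) (d : ℕ) (ε : ℝ) (n : ℕ → ℕ) (j : ℕ) :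
    psi x d ε (pfx n j) = pfx (fun i => (prev x d ε (pfx n (i+1)).reverse).headI) j := by
  induction j with
  | zero => simp
  | succ j ih =>
      rw [pfx_succ, psi_concat, ih, pfx_succ]
      congr 1
      rw [prev_pfx_head]

lemma psi_rev (x : List ℕ → X) (d : ℕ) (ε : ℝ) (l : List ℕ) :
    (prev x d ε l.reverse).reverse = psi x d ε l := rfl

/-- Pruning lemma: every normalized weakly null tree has a "full subtree" all of whose
branches come with a functional witnessing almost-biorthogonality at position `d`. -/
lemma prune_exists {x : List ℕ → X} (hx : IsNWNTree x) {ε : ℝ} (hε : 0 < ε) (d : ℕ) :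
    ∃ y : List ℕ → X, IsNWNTree y ∧
      (∀ n, StrictMono n → ∃ n', StrictMono n' ∧ ∀ i, TreeBranch y n i = TreeBranch x n' i) ∧
      (∀ n, StrictMono n → ∃ f : StrongDual ℝ X, ‖f‖ ≤ 1 ∧
        f (TreeBranch y n d) = 1 ∧ ∀ j, d < j → |f (TreeBranch y n j)| ≤ ε * (2⁻¹:ℝ)^j) := by
  refine ⟨prTree x d ε, ⟨fun l _ => hx.1 _ (psi_sorted x d ε l), ?_⟩, ?_, ?_⟩
  · -- weakly null nodes
    intro l _ f
    have hnode := hx.2 (psi x d ε l) (psi_sorted x d ε l) f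
    have hcomp : Tendsto (fun m : ℕ => Mb x d ε (prev x d ε l.reverse) + m) atTop atTop :=
      (strictMono_nat_of_lt_succ (fun m => by omega)).tendsto_atTop
    have hres := hnode.comp hcomp
    refine hres.congr fun m => ?_
    simp only [Function.comp, prTree, psi_concat]
  · -- branches of the pruned tree are branches of x
    intro n hn
    refine ⟨fun i => (prev x d ε (pfx n (i+1)).reverse).headI, ?_, ?_⟩
    · apply strictMono_nat_of_lt_succ
      intro i
      rw [prev_pfx_head x d ε n (i+1)]
      have h1 := Mb_ge_head x d ε (prev x d ε (pfx n (i+1)).reverse)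
      omega
    · intro i
      simp only [treeBranch_eq_pfx, prTree]
      rw [psi_pfx]
  · -- the almost-biorthogonal functional
    intro n hn
    refine ⟨Fn x (psi x d ε (pfx n (d+1))), Fn_norm x _, ?_, ?_⟩
    · have h1 : TreeBranch (prTree x d ε) n d = x (psi x d ε (pfx n (d+1))) := rfl
      rw [h1, Fn_app]
      rw [hx.1 _ (psi_sorted x d ε (pfx n (d+1)))]
    · intro j hdj
      have h1 : TreeBranch (prTree x d ε) n j = x (psi x d ε (pfx n (j+1))) := rfl
      set r := prev x d ε (pfx n j).reverse with hr
      have h2 : psi x d ε (pfx n (j+1)) = r.reverse ++ [Mb x d ε r + n j] := by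
        rw [pfx_succ, psi_concat, psi_rev]
      have h3 : (r.reverse).take (d+1) = psi x d ε (pfx n (d+1)) := by
        rw [psi_rev, psi_pfx, psi_pfx, pfx_take]
        omega
      have h4 : (r.reverse).Pairwise (· < ·) := by
        rw [psi_rev]; exact psi_sorted x d ε _
      have h5 := Mb_spec hx hε d r h4 (n j)
      rw [h3] at h5
      have h6 : r.length = j := by
        rw [hr, prev_length]
        simp
      rw [h1, h2]
      rw [h6] at h5
      exact h5


/-! #### Tail-domination properties and descent in `d` -/

/-- `X` has uniform lower tree estimates for coefficients supported in `[d, ∞)`. -/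
def LowP (X : Type*) [NormedAddCommGroup X] [NormedSpace ℝ X]
    {V : Type*} [NormedAddCommGroup V] [NormedSpace ℝ V]
    (v : ℕ → V) (d : ℕ) (C : ℝ) : Prop :=
  ∀ x : List ℕ → X, IsNWNTree x → ∃ n, StrictMono n ∧
    ∀ a : ℕ →₀ ℝ, (∀ i, i < d → a i = 0) →
      ‖Sm a v‖ ≤ C * ‖Sm a (TreeBranch x n)‖

/-- `X` has uniform upper tree estimates for coefficients supported in `[d, ∞)`. -/
def UpP (X : Type*) [NormedAddCommGroup X] [NormedSpace ℝ X]
    {V : Type*} [NormedAddCommGroup V] [NormedSpace ℝ V]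
    (u : ℕ → V) (d : ℕ) (C : ℝ) : Prop :=
  ∀ x : List ℕ → X, IsNWNTree x → ∃ n, StrictMono n ∧
    ∀ a : ℕ →₀ ℝ, (∀ i, i < d → a i = 0) →
      ‖Sm a (TreeBranch x n)‖ ≤ C * ‖Sm a u‖

lemma geo_sum_le (s : Finset ℕ) : ∑ i ∈ s, (2⁻¹:ℝ)^i ≤ 2 := by
  have hsub : s ⊆ Finset.range (s.sup id + 1) := fun i hi =>
    Finset.mem_range.mpr (Nat.lt_succ_of_le (Finset.le_sup (f := id) hi))
  calc ∑ i ∈ s, (2⁻¹:ℝ)^i ≤ ∑ i ∈ Finset.range (s.sup id + 1), (2⁻¹:ℝ)^i :=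
        Finset.sum_le_sum_of_subset_of_nonneg hsub (fun i _ _ => by positivity)
    _ ≤ 2 := by
        have := sum_geometric_two_le (s.sup id + 1)
        simpa [one_div] using this

lemma lowP_descent {v : ℕ → V} (hv1 : SeqNormalized v) (hv2 : SeqUncond v)
    {d : ℕ} {C : ℝ} (hC : 1 ≤ C) (h : LowP X v (d+1) C) : LowP X v d (4*C+3) := by
  intro x hx
  have hC0 : (0:ℝ) < C := by linarith
  have hε : (0:ℝ) < 1/(4*C) := by positivity
  obtain ⟨y, hy, hbr, hfn⟩ := prune_exists hx hε d
  obtain ⟨n, hn, hdom⟩ := h y hy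
  obtain ⟨n', hn', hbn⟩ := hbr n hn
  obtain ⟨f, hf1, hfd, hfs⟩ := hfn n hn
  refine ⟨n', hn', ?_⟩
  intro a ha
  set γ : ℕ → X := TreeBranch y n with hγ
  have hbeq : Sm a (TreeBranch x n') = Sm a γ :=
    Sm_congr fun i _ => (hbn i).symm
  rw [hbeq]
  set S := ‖Sm a γ‖ with hS
  set a' := a.erase d with ha'
  set T := ‖Sm a' γ‖ with hT
  have hS0 : 0 ≤ S := norm_nonneg _
  have hT0 : 0 ≤ T := norm_nonneg _
  have hγd : ‖γ d‖ = 1 := branch_norm hy hn d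
  have h1 : T ≤ S + |a d| := by
    rw [hT, ha', Sm_erase]
    refine (norm_sub_le _ _).trans ?_
    rw [norm_smul, hγd, Real.norm_eq_abs, mul_one]
  have ha'0 : ∀ i, i < d + 1 → a' i = 0 := by
    intro i hi
    rcases Nat.lt_succ_iff_lt_or_eq.mp hi with hlt | heq
    · rw [ha', Finsupp.erase_ne (Nat.ne_of_lt hlt)]
      exact ha i hlt
    · rw [heq, ha', Finsupp.erase_same]
  have h2 : ‖Sm a' v‖ ≤ C * T := hdom a' ha'0
  have h3 : ∀ i, i ≠ d → |a i| ≤ C * T := by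
    intro i hid
    have : a i = a' i := by rw [ha', Finsupp.erase_ne hid]
    rw [this]
    exact (coord_le hv1 hv2 a' i).trans h2
  have h4 : |a d| ≤ 3 * S := by
    by_cases hd : d ∈ a.support
    · have hsum : f (Sm a γ) = ∑ i ∈ a.support, a i * f (γ i) := by
        rw [Sm_def, map_sum]
        refine Finset.sum_congr rfl fun i _ => ?_
        rw [map_smul, smul_eq_mul]
      have hsplit : (∑ i ∈ a.support.erase d, a i * f (γ i)) + a d * f (γ d)
          = ∑ i ∈ a.support, a i * f (γ i) := Finset.sum_erase_add _ _ hd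
      have hgd : f (γ d) = 1 := hfd
      have hkey : a d = f (Sm a γ) - ∑ i ∈ a.support.erase d, a i * f (γ i) := by
        rw [hsum, ← hsplit, hgd, mul_one]
        ring
      have hfb : |f (Sm a γ)| ≤ S := by
        have := f.le_opNorm (Sm a γ)
        have h2' : ‖f (Sm a γ)‖ ≤ 1 * ‖Sm a γ‖ :=
          this.trans (mul_le_mul_of_nonneg_right hf1 (norm_nonneg _))
        rw [one_mul] at h2'
        exact (Real.norm_eq_abs _ ▸ h2')
      have hrest : |∑ i ∈ a.support.erase d, a i * f (γ i)|
          ≤ (C * T * (1/(4*C))) * 2 := by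
        refine (Finset.abs_sum_le_sum_abs _ _).trans ?_
        have hterm : ∀ i ∈ a.support.erase d,
            |a i * f (γ i)| ≤ (C * T * (1/(4*C))) * (2⁻¹:ℝ)^i := by
          intro i hi
          have hid : i ≠ d := Finset.ne_of_mem_erase hi
          have hmem : i ∈ a.support := Finset.mem_of_mem_erase hi
          have hge : d < i := by
            rcases Nat.lt_or_ge i d with hlt | hge'
            · exact absurd (ha i hlt) (Finsupp.mem_support_iff.mp hmem)
            · exact lt_of_le_of_ne hge' (Ne.symm hid)
          have hsmall := hfs i hge
          rw [abs_mul]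
          calc |a i| * |f (γ i)| ≤ (C * T) * (1/(4*C) * (2⁻¹:ℝ)^i) := by
                refine mul_le_mul (h3 i hid) hsmall (abs_nonneg _) ?_
                positivity
            _ = (C * T * (1/(4*C))) * (2⁻¹:ℝ)^i := by ring
        refine (Finset.sum_le_sum hterm).trans ?_
        rw [← Finset.mul_sum]
        refine mul_le_mul_of_nonneg_left (geo_sum_le _) ?_
        positivity
      have hsimp : C * T * (1/(4*C)) * 2 = T / 2 := by
        field_simp
        ring
      rw [hsimp] at hrest
      have habs : |a d| ≤ S + T/2 := by
        rw [hkey]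
        exact (abs_sub _ _).trans (by linarith)
      linarith [h1, habs]
    · rw [Finsupp.notMem_support_iff.mp hd]
      simp only [abs_zero]
      positivity
  have h5 : ‖Sm a v‖ ≤ ‖Sm a' v‖ + |a d| := by
    have he : Sm a' v = Sm a v - a d • v d := by rw [ha']; exact Sm_erase a v d
    have : Sm a v = Sm a' v + a d • v d := by rw [he]; abel
    rw [this]
    refine (norm_add_le _ _).trans ?_
    rw [norm_smul, hv1 d, Real.norm_eq_abs, mul_one]
  have hTS : T ≤ 4 * S := by linarith
  have : C * T ≤ C * (4 * S) := mul_le_mul_of_nonneg_left hTS (le_of_lt hC0)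
  calc ‖Sm a v‖ ≤ ‖Sm a' v‖ + |a d| := h5
    _ ≤ C * T + 3 * S := by linarith
    _ ≤ (4*C+3) * S := by linarith

lemma upP_descent {u : ℕ → V} (hu1 : SeqNormalized u) (hu2 : SeqUncond u)
    {d : ℕ} {C : ℝ} (hC : 1 ≤ C) (h : UpP X u (d+1) C) : UpP X u d (C+1) := by
  intro x hx
  obtain ⟨n, hn, hdom⟩ := h x hx
  refine ⟨n, hn, ?_⟩
  intro a ha
  set γ : ℕ → X := TreeBranch x n with hγ
  set a' := a.erase d with ha'
  have ha'0 : ∀ i, i < d + 1 → a' i = 0 := by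
    intro i hi
    rcases Nat.lt_succ_iff_lt_or_eq.mp hi with hlt | heq
    · rw [ha', Finsupp.erase_ne (Nat.ne_of_lt hlt)]
      exact ha i hlt
    · rw [heq, ha', Finsupp.erase_same]
  have h1 : ‖Sm a γ‖ ≤ ‖Sm a' γ‖ + |a d| := by
    have he : Sm a' γ = Sm a γ - a d • γ d := by rw [ha']; exact Sm_erase a γ d
    have h2 : Sm a γ = Sm a' γ + a d • γ d := by rw [he]; abel
    rw [h2]
    refine (norm_add_le _ _).trans ?_
    rw [norm_smul, branch_norm hx hn d, Real.norm_eq_abs, mul_one]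
  have h2 : ‖Sm a' γ‖ ≤ C * ‖Sm a' u‖ := hdom a' ha'0
  have h3 : ‖Sm a' u‖ ≤ ‖Sm a u‖ := by rw [ha']; exact erase_le hu2 a d
  have h4 : |a d| ≤ ‖Sm a u‖ := coord_le hu1 hu2 a d
  have hC0 : (0:ℝ) ≤ C := by linarith
  have h5 : C * ‖Sm a' u‖ ≤ C * ‖Sm a u‖ := mul_le_mul_of_nonneg_left h3 hC0
  calc ‖Sm a γ‖ ≤ ‖Sm a' γ‖ + |a d| := h1
    _ ≤ C * ‖Sm a u‖ + ‖Sm a u‖ := by linarith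
    _ = (C+1) * ‖Sm a u‖ := by ring

lemma lowP_zero {v : ℕ → V} (hv1 : SeqNormalized v) (hv2 : SeqUncond v) :
    ∀ d, ∀ C : ℝ, 1 ≤ C → LowP X v d C → ∃ C' : ℝ, 1 ≤ C' ∧ LowP X v 0 C' := by
  intro d
  induction d with
  | zero => exact fun C hC h => ⟨C, hC, h⟩
  | succ d ih =>
      intro C hC h
      exact ih (4*C+3) (by linarith) (lowP_descent hv1 hv2 hC h)

lemma upP_zero {u : ℕ → V} (hu1 : SeqNormalized u) (hu2 : SeqUncond u) :
    ∀ d, ∀ C : ℝ, 1 ≤ C → UpP X u d C → ∃ C' : ℝ, 1 ≤ C' ∧ UpP X u 0 C' := by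
  intro d
  induction d with
  | zero => exact fun C hC h => ⟨C, hC, h⟩
  | succ d ih =>
      intro C hC h
      exact ih (C+1) (by linarith) (upP_descent hu1 hu2 hC h)


/-! #### Gluing countably many bad trees into one -/

section Concat

variable (B : ℕ × ℕ → List ℕ → X) (W : (ℕ →₀ ℝ) → (ℕ → X) → ℝ → Prop)

open scoped Classical in
/-- The state machine: fuelled version.  The state `(s, D)` at a prefix records the index
`s` of the current segment and the position `D` at which it started. -/
def stA : ℕ → List ℕ → ℕ × ℕ
  | 0, _ => (0, 0)
  | (f+1), l =>
      if l.length = 0 then (0, 0)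
      else if ∃ a : ℕ →₀ ℝ,
          (∀ i ∈ a.support, (stA f l.dropLast).2 ≤ i ∧ i + 1 ≤ l.length) ∧
          W a (fun i => if i + 1 ≤ l.length
              then B (stA f (l.take i)) (l.take (i+1)) else 0)
            (((stA f l.dropLast).1 : ℝ) + 1)
      then ((stA f l.dropLast).1 + 1, l.length)
      else stA f l.dropLast

lemma stA_nil : ∀ f, stA B W f [] = (0, 0)
  | 0 => rfl
  | (f+1) => by rw [stA]; simp

lemma stA_fuel : ∀ (N : ℕ) (l : List ℕ), l.length ≤ N →
    ∀ f f', l.length ≤ f → l.length ≤ f' → stA B W f l = stA B W f' l := by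
  intro N
  induction N with
  | zero =>
      intro l hl f f' _ _
      have hnil : l = [] := List.length_eq_zero_iff.mp (Nat.le_zero.mp hl)
      rw [hnil, stA_nil, stA_nil]
  | succ N ih =>
      intro l hl f f' hf hf'
      rcases Nat.eq_zero_or_pos l.length with h0 | hpos
      · have hnil : l = [] := List.length_eq_zero_iff.mp h0
        rw [hnil, stA_nil, stA_nil]
      · obtain ⟨g, rfl⟩ : ∃ g, f = g + 1 := ⟨f - 1, by omega⟩
        obtain ⟨g', rfl⟩ : ∃ g', f' = g' + 1 := ⟨f' - 1, by omega⟩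
        have hlen0 : ¬ (l.length = 0) := by omega
        have hdrop : stA B W g l.dropLast = stA B W g' l.dropLast := by
          apply ih l.dropLast <;> simp [List.length_dropLast] <;> omega
        have hent : (fun i => if i + 1 ≤ l.length
              then B (stA B W g (l.take i)) (l.take (i+1)) else (0:X))
            = (fun i => if i + 1 ≤ l.length
              then B (stA B W g' (l.take i)) (l.take (i+1)) else 0) := by
          funext i
          by_cases hi : i + 1 ≤ l.length
          · simp only [if_pos hi]
            have htk : stA B W g (l.take i) = stA B W g' (l.take i) := by
              apply ih (l.take i) <;> simp [List.length_take] <;> omega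
            rw [htk]
          · simp only [if_neg hi]
        rw [stA, stA]
        simp only [if_neg hlen0]
        rw [hdrop, hent]

/-- The state at a prefix. -/
def stF (l : List ℕ) : ℕ × ℕ := stA B W l.length l

/-- The sequence of tree vectors along a prefix. -/
def entF (l : List ℕ) : ℕ → X :=
  fun i => if i + 1 ≤ l.length then B (stF B W (l.take i)) (l.take (i+1)) else 0

lemma stF_nil : stF B W [] = (0, 0) := stA_nil B W 0

open scoped Classical in
lemma stF_concat (l : List ℕ) (m : ℕ) :
    stF B W (l ++ [m]) =
      if ∃ a : ℕ →₀ ℝ,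
          (∀ i ∈ a.support, (stF B W l).2 ≤ i ∧ i + 1 ≤ l.length + 1) ∧
          W a (entF B W (l ++ [m])) (((stF B W l).1 : ℝ) + 1)
      then ((stF B W l).1 + 1, l.length + 1)
      else stF B W l := by
  have hlen : (l ++ [m]).length = l.length + 1 := by simp
  have hlen0 : ¬ ((l ++ [m]).length = 0) := by simp
  have hdrop : (l ++ [m]).dropLast = l := List.dropLast_concat
  have h1 : stF B W (l ++ [m]) = stA B W (l.length + 1) (l ++ [m]) := by
    rw [stF, hlen]
  rw [h1, stA]
  simp only [hdrop, hlen, if_neg (Nat.succ_ne_zero l.length)]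
  have h2 : stA B W l.length l = stF B W l := rfl
  have h3 : (fun i => if i + 1 ≤ l.length + 1
        then B (stA B W l.length ((l ++ [m]).take i)) ((l ++ [m]).take (i+1)) else (0:X))
      = entF B W (l ++ [m]) := by
    funext i
    rw [entF]
    by_cases hi : i + 1 ≤ (l ++ [m]).length
    · rw [hlen] at hi
      simp only [if_pos hi, hlen]
      have htk : stA B W l.length ((l ++ [m]).take i) = stF B W ((l ++ [m]).take i) := by
        rw [stF]
        apply stA_fuel B W (l.length + 1) <;> simp [List.length_take] <;> omega
      rw [htk]
    · rw [hlen] at hi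
      simp only [if_neg hi, hlen]
  rw [h2, h3]

end Concat


section ConcatMain

variable (B : ℕ × ℕ → List ℕ → X) (W : (ℕ →₀ ℝ) → (ℕ → X) → ℝ → Prop)

open scoped Classical in
/-- The condition triggering the start of a new segment. -/
def Cnd (l : List ℕ) (m : ℕ) : Prop :=
  ∃ a : ℕ →₀ ℝ,
    (∀ i ∈ a.support, (stF B W l).2 ≤ i ∧ i + 1 ≤ l.length + 1) ∧
    W a (entF B W (l ++ [m])) (((stF B W l).1 : ℝ) + 1)

lemma st_step (l : List ℕ) (m : ℕ) :
    (stF B W (l ++ [m]) = ((stF B W l).1 + 1, l.length + 1) ∧ Cnd B W l m) ∨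
    (stF B W (l ++ [m]) = stF B W l ∧ ¬ Cnd B W l m) := by
  by_cases h : Cnd B W l m
  · left
    refine ⟨?_, h⟩
    rw [stF_concat]
    exact if_pos h
  · right
    refine ⟨?_, h⟩
    rw [stF_concat]
    exact if_neg h

variable (n : ℕ → ℕ)

/-- The state along the branch `n`. -/
def stP (j : ℕ) : ℕ × ℕ := stF B W (pfx n j)

lemma stP_zero : stP B W n 0 = (0, 0) := stF_nil B W

lemma stP_step (j : ℕ) :
    (stP B W n (j+1) = ((stP B W n j).1 + 1, j + 1) ∧ Cnd B W (pfx n j) (n j)) ∨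
    (stP B W n (j+1) = stP B W n j ∧ ¬ Cnd B W (pfx n j) (n j)) := by
  have h := st_step B W (pfx n j) (n j)
  rw [← pfx_succ, pfx_length] at h
  exact h

lemma st_bound (j : ℕ) : (stP B W n j).2 ≤ j := by
  induction j with
  | zero => simp [stP_zero]
  | succ j ih =>
      rcases stP_step B W n j with ⟨heq, _⟩ | ⟨heq, _⟩
      · rw [heq]
      · rw [heq]
        omega

lemma st_mono : Monotone (fun j => (stP B W n j).1) := by
  apply monotone_nat_of_le_succ
  intro j
  rcases stP_step B W n j with ⟨heq, _⟩ | ⟨heq, _⟩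
  · rw [heq]
    exact Nat.le_succ _
  · rw [heq]

lemma st_step_of_eq {j : ℕ} (h : (stP B W n (j+1)).1 = (stP B W n j).1) :
    stP B W n (j+1) = stP B W n j := by
  rcases stP_step B W n j with ⟨heq, _⟩ | ⟨heq, _⟩
  · rw [heq] at h; simp at h
  · exact heq

lemma st_persist : ∀ j k : ℕ, (stP B W n j).2 ≤ k → k ≤ j →
    stP B W n k = stP B W n j := by
  intro j
  induction j with
  | zero => intro k _ hk; rw [Nat.le_zero.mp hk]
  | succ j ih =>
      intro k h1 h2
      rcases Nat.lt_succ_iff_lt_or_eq.mp (Nat.lt_succ_of_le h2) with hk | hk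
      · rcases stP_step B W n j with ⟨heq, _⟩ | ⟨heq, _⟩
        · rw [heq] at h1
          simp only at h1
          omega
        · rw [heq] at h1 ⊢
          exact ih k h1 (by omega)
      · rw [hk]

lemma entF_eq_branch (i L : ℕ) (hiL : i + 1 ≤ L) :
    entF B W (pfx n L) i
      = TreeBranch (fun l => B (stF B W l.dropLast) l) n i := by
  rw [entF, pfx_length, if_pos hiL, pfx_take n i L (by omega), pfx_take n (i+1) L hiL]
  show B (stF B W (pfx n i)) (pfx n (i+1))
      = B (stF B W (pfx n (i+1)).dropLast) (pfx n (i+1))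
  rw [pfx_succ, List.dropLast_concat]

lemma st_progress (hn : StrictMono n)
    (hBbad : ∀ p : ℕ × ℕ, ∀ n' : ℕ → ℕ, StrictMono n' → ∃ a : ℕ →₀ ℝ,
        (∀ i ∈ a.support, p.2 ≤ i) ∧ W a (TreeBranch (B p) n') ((p.1:ℝ)+1))
    (hsub : ∀ (a : ℕ →₀ ℝ) (γ γ' : ℕ → X) (c : ℝ),
        (∀ i ∈ a.support, γ i = γ' i) → W a γ c → W a γ' c)
    (j : ℕ) : ∃ L, j < L ∧ (stP B W n j).1 < (stP B W n L).1 := by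
  obtain ⟨a, haD, haW⟩ := hBbad (stP B W n j) n hn
  set L := max (j+1) (a.support.sup id + 1) with hL
  clear_value L
  by_contra hcon
  push_neg at hcon
  have hLj : j < L := by omega
  have hcL : (stP B W n L).1 ≤ (stP B W n j).1 := hcon L hLj
  have hseq : ∀ k, j ≤ k → k ≤ L → stP B W n k = stP B W n j := by
    intro k hk1 hk2
    induction k with
    | zero => rw [Nat.le_zero.mp hk1]
    | succ k ihk =>
        rcases Nat.lt_succ_iff_lt_or_eq.mp (Nat.lt_succ_of_le hk1) with hjk | hjk
        · have hkj : j ≤ k := by omega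
          have hik := ihk hkj (by omega)
          have hc1 : (stP B W n (k+1)).1 ≤ (stP B W n j).1 :=
            le_trans (st_mono B W n hk2) hcL
          have hc2 : (stP B W n j).1 ≤ (stP B W n (k+1)).1 :=
            st_mono B W n (by omega)
          have hc : (stP B W n (k+1)).1 = (stP B W n k).1 := by
            rw [hik]; omega
          rw [st_step_of_eq B W n hc, hik]
        · rw [← hjk]
  have hall : ∀ k, (stP B W n j).2 ≤ k → k ≤ L → stP B W n k = stP B W n j := by
    intro k hk1 hk2
    rcases le_or_gt j k with h3 | h3
    · exact hseq k h3 hk2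
    · exact st_persist B W n j k hk1 (le_of_lt h3)
  obtain ⟨L', rfl⟩ : ∃ L', L = L' + 1 := ⟨L - 1, by omega⟩
  have hjL' : j ≤ L' := by omega
  have hstL' : stP B W n L' = stP B W n j := hseq L' hjL' (by omega)
  have hCnd : Cnd B W (pfx n L') (n L') := by
    refine ⟨a, ?_, ?_⟩
    · intro i hi
      constructor
      · show (stF B W (pfx n L')).2 ≤ i
        have h4 : (stF B W (pfx n L')).2 = (stP B W n j).2 := by
          rw [← hstL']; rfl
        rw [h4]
        exact haD i hi
      · have h5 : i ≤ a.support.sup id := Finset.le_sup (f := id) hi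
        rw [pfx_length]
        omega
    · rw [← pfx_succ]
      have h6 : (stF B W (pfx n L')).1 = (stP B W n j).1 := by
        rw [← hstL']; rfl
      rw [h6]
      refine hsub a _ _ _ ?_ haW
      intro i hi
      have h5 : i ≤ a.support.sup id := Finset.le_sup (f := id) hi
      have hiL : i + 1 ≤ L' + 1 := by omega
      have h7 : entF B W (pfx n (L'+1)) i
          = B (stF B W (pfx n i)) (pfx n (i+1)) := by
        rw [entF, pfx_length, if_pos hiL, pfx_take n i (L'+1) (by omega),
          pfx_take n (i+1) (L'+1) hiL]
      have h8 : stF B W (pfx n i) = stP B W n j :=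
        hall i (haD i hi) (by omega)
      show TreeBranch (B (stP B W n j)) n i = entF B W (pfx n (L'+1)) i
      rw [h7, h8]
      rfl
  rcases stP_step B W n L' with ⟨heq, _⟩ | ⟨_, hnc⟩
  · have h9 : (stP B W n (L'+1)).1 = (stP B W n L').1 + 1 := by rw [heq]
    rw [hstL'] at h9
    omega
  · exact hnc hCnd

lemma st_unbounded (hn : StrictMono n)
    (hBbad : ∀ p : ℕ × ℕ, ∀ n' : ℕ → ℕ, StrictMono n' → ∃ a : ℕ →₀ ℝ,
        (∀ i ∈ a.support, p.2 ≤ i) ∧ W a (TreeBranch (B p) n') ((p.1:ℝ)+1))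
    (hsub : ∀ (a : ℕ →₀ ℝ) (γ γ' : ℕ → X) (c : ℝ),
        (∀ i ∈ a.support, γ i = γ' i) → W a γ c → W a γ' c) :
    ∀ s₀ : ℕ, ∃ j, s₀ < (stP B W n j).1 := by
  intro s₀
  induction s₀ with
  | zero =>
      obtain ⟨L, _, hL⟩ := st_progress B W n hn hBbad hsub 0
      refine ⟨L, ?_⟩
      rw [stP_zero] at hL
      exact hL
  | succ s₀ ih =>
      obtain ⟨j, hj⟩ := ih
      obtain ⟨L, _, hL⟩ := st_progress B W n hn hBbad hsub j
      exact ⟨L, by omega⟩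

end ConcatMain

/-- Gluing lemma: from a family of bad trees (one for each window start `D` and
constant `s+1`) we produce a single tree, every branch of which fails every constant. -/
lemma concat_exists
    (B : ℕ × ℕ → List ℕ → X) (W : (ℕ →₀ ℝ) → (ℕ → X) → ℝ → Prop)
    (hB : ∀ p : ℕ × ℕ, IsNWNTree (B p))
    (hBbad : ∀ p : ℕ × ℕ, ∀ n' : ℕ → ℕ, StrictMono n' → ∃ a : ℕ →₀ ℝ,
        (∀ i ∈ a.support, p.2 ≤ i) ∧ W a (TreeBranch (B p) n') ((p.1:ℝ)+1))
    (hsub : ∀ (a : ℕ →₀ ℝ) (γ γ' : ℕ → X) (c : ℝ),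
        (∀ i ∈ a.support, γ i = γ' i) → W a γ c → W a γ' c)
    (hmono : ∀ (a : ℕ →₀ ℝ) (γ : ℕ → X) (c c' : ℝ), c' ≤ c → W a γ c → W a γ c') :
    ∃ z : List ℕ → X, IsNWNTree z ∧
      ∀ n : ℕ → ℕ, StrictMono n → ∀ c : ℝ, ∃ a, W a (TreeBranch z n) c := by
  classical
  refine ⟨fun l => B (stF B W l.dropLast) l, ⟨?_, ?_⟩, ?_⟩
  · intro l hl
    exact (hB _).1 l hl
  · intro l hl f
    have h1 := (hB (stF B W l)).2 l hl f
    refine h1.congr fun m => ?_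
    show f (B (stF B W l) (l ++ [m])) = f (B (stF B W (l ++ [m]).dropLast) (l ++ [m]))
    rw [List.dropLast_concat]
  · intro n hn c
    obtain ⟨s₀, hs₀⟩ := exists_nat_ge c
    have hex : ∃ j, s₀ < (stP B W n j).1 := st_unbounded B W n hn hBbad hsub s₀
    obtain ⟨L, hL, hmin⟩ : ∃ L, s₀ < (stP B W n L).1 ∧
        ∀ k, k < L → (stP B W n k).1 ≤ s₀ := by
      refine ⟨Nat.find hex, Nat.find_spec hex, fun k hk => ?_⟩
      have := Nat.find_min hex hk
      omega
    have hL0 : L ≠ 0 := by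
      intro h0
      rw [h0, stP_zero] at hL
      omega
    obtain ⟨L', rfl⟩ : ∃ L', L = L' + 1 := ⟨L - 1, by omega⟩
    have hle : (stP B W n L').1 ≤ s₀ := hmin L' (Nat.lt_succ_self L')
    rcases stP_step B W n L' with ⟨heq, hC⟩ | ⟨heq, _⟩
    · obtain ⟨a, ha1, haW⟩ := hC
      refine ⟨a, ?_⟩
      have htr : W a (TreeBranch (fun l => B (stF B W l.dropLast) l) n) 
          (((stF B W (pfx n L')).1 : ℝ) + 1) := by
        refine hsub a _ _ _ ?_ haW
        intro i hi
        have h2 := (ha1 i hi).2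
        rw [pfx_length] at h2
        rw [← pfx_succ]
        exact entF_eq_branch B W n i (L'+1) h2
      refine hmono a _ _ c ?_ htr
      have h3 : (stF B W (pfx n L')).1 = (stP B W n L').1 := rfl
      rw [h3]
      have h4 : (stP B W n (L'+1)).1 = (stP B W n L').1 + 1 := by rw [heq]
      have h5 : (s₀ : ℝ) ≤ ((stP B W n L').1 : ℝ) + 1 := by
        have : s₀ ≤ (stP B W n L').1 + 1 := by omega
        exact_mod_cast this
      linarith
    · rw [heq] at hL
      omega

end S1

end Statement1Aux
/-- If every normalized weakly null tree in `X` has a branch dominating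
`(v i)` and a branch dominated by `(u i)`, then there is a single constant `C ≥ 1` such that
`X` satisfies `C`-`(V,U)`-tree estimates. -/
theorem statement1 {X U V : Type*}
    [NormedAddCommGroup X] [NormedSpace ℝ X] [CompleteSpace X]
    [NormedAddCommGroup U] [NormedSpace ℝ U] [CompleteSpace U]
    [NormedAddCommGroup V] [NormedSpace ℝ V] [CompleteSpace V]
    (u : ℕ → U) (v : ℕ → V) (hu : Is1UncondBasis u) (hv : Is1UncondBasis v)
    (h : ∀ x : List ℕ → X, IsNWNTree x →
      (∃ n : ℕ → ℕ, StrictMono n ∧ ∃ c : ℝ, 1 ≤ c ∧ Dominates c (TreeBranch x n) v) ∧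
      (∃ n : ℕ → ℕ, StrictMono n ∧ ∃ c : ℝ, 1 ≤ c ∧ Dominates c u (TreeBranch x n))) :
    ∃ C : ℝ, 1 ≤ C ∧ LowerTreeEst X C v ∧ UpperTreeEst X C u := by
  classical
  obtain ⟨hv1, hv2, -⟩ := hv
  obtain ⟨hu1, hu2, -⟩ := hu
  -- Lower estimates with a uniform constant
  have lower : ∃ C : ℝ, 1 ≤ C ∧ S1.LowP X v 0 C := by
    by_cases hQ : ∃ d, ∃ C : ℝ, 1 ≤ C ∧ S1.LowP X v d C
    · obtain ⟨d, C, hC, hP⟩ := hQ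
      exact S1.lowP_zero hv1 hv2 d C hC hP
    · exfalso
      push_neg at hQ
      have hbad : ∀ p : ℕ × ℕ, ∃ x : List ℕ → X, IsNWNTree x ∧
          ∀ n' : ℕ → ℕ, StrictMono n' → ∃ a : ℕ →₀ ℝ, (∀ i ∈ a.support, p.2 ≤ i) ∧
            ((p.1 : ℝ) + 1) * ‖S1.Sm a (TreeBranch x n')‖ < ‖S1.Sm a v‖ := by
        intro p
        have hC1 : (1:ℝ) ≤ (p.1 : ℝ) + 1 := by
          have := Nat.cast_nonneg (α := ℝ) p.1
          linarith
        have h1 : ¬ (∀ x : List ℕ → X, IsNWNTree x → ∃ n, StrictMono n ∧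
            ∀ a : ℕ →₀ ℝ, (∀ i, i < p.2 → a i = 0) →
              ‖S1.Sm a v‖ ≤ ((p.1 : ℝ) + 1) * ‖S1.Sm a (TreeBranch x n)‖) :=
          hQ p.2 ((p.1 : ℝ) + 1) hC1
        push_neg at h1
        obtain ⟨x, hx, h2⟩ := h1
        refine ⟨x, hx, fun n' hn' => ?_⟩
        obtain ⟨a, ha1, ha2⟩ := h2 n' hn'
        refine ⟨a, fun i hi => ?_, ha2⟩
        by_contra hcon
        exact (Finsupp.mem_support_iff.mp hi) (ha1 i (by omega))
      set W : (ℕ →₀ ℝ) → (ℕ → X) → ℝ → Prop :=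
        fun a γ c => c * ‖S1.Sm a γ‖ < ‖S1.Sm a v‖ with hW
      set B : ℕ × ℕ → List ℕ → X := fun p => (hbad p).choose with hB
      obtain ⟨z, hz, hzbad⟩ := S1.concat_exists B W
        (fun p => (hbad p).choose_spec.1)
        (fun p n' hn' => (hbad p).choose_spec.2 n' hn')
        (fun a γ γ' c hagree hw => by
          show c * ‖S1.Sm a γ'‖ < ‖S1.Sm a v‖
          rw [← S1.Sm_congr hagree]
          exact hw)
        (fun a γ c c' hcc hw => by
          show c' * ‖S1.Sm a γ‖ < ‖S1.Sm a v‖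
          have hx2 : c * ‖S1.Sm a γ‖ < ‖S1.Sm a v‖ := hw
          have := mul_le_mul_of_nonneg_right hcc (norm_nonneg (S1.Sm a γ))
          linarith)
      obtain ⟨n, hn, c, hc1, hdom⟩ := (h z hz).1
      obtain ⟨a, haW⟩ := hzbad n hn c
      have haW' : c * ‖S1.Sm a (TreeBranch z n)‖ < ‖S1.Sm a v‖ := haW
      have hdom' : ‖S1.Sm a v‖ ≤ c * ‖S1.Sm a (TreeBranch z n)‖ := hdom a
      linarith
  -- Upper estimates with a uniform constant
  have upper : ∃ C : ℝ, 1 ≤ C ∧ S1.UpP X u 0 C := by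
    by_cases hQ : ∃ d, ∃ C : ℝ, 1 ≤ C ∧ S1.UpP X u d C
    · obtain ⟨d, C, hC, hP⟩ := hQ
      exact S1.upP_zero hu1 hu2 d C hC hP
    · exfalso
      push_neg at hQ
      have hbad : ∀ p : ℕ × ℕ, ∃ x : List ℕ → X, IsNWNTree x ∧
          ∀ n' : ℕ → ℕ, StrictMono n' → ∃ a : ℕ →₀ ℝ, (∀ i ∈ a.support, p.2 ≤ i) ∧
            ((p.1 : ℝ) + 1) * ‖S1.Sm a u‖ < ‖S1.Sm a (TreeBranch x n')‖ := by
        intro p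
        have hC1 : (1:ℝ) ≤ (p.1 : ℝ) + 1 := by
          have := Nat.cast_nonneg (α := ℝ) p.1
          linarith
        have h1 : ¬ (∀ x : List ℕ → X, IsNWNTree x → ∃ n, StrictMono n ∧
            ∀ a : ℕ →₀ ℝ, (∀ i, i < p.2 → a i = 0) →
              ‖S1.Sm a (TreeBranch x n)‖ ≤ ((p.1 : ℝ) + 1) * ‖S1.Sm a u‖) :=
          hQ p.2 ((p.1 : ℝ) + 1) hC1
        push_neg at h1
        obtain ⟨x, hx, h2⟩ := h1
        refine ⟨x, hx, fun n' hn' => ?_⟩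
        obtain ⟨a, ha1, ha2⟩ := h2 n' hn'
        refine ⟨a, fun i hi => ?_, ha2⟩
        by_contra hcon
        exact (Finsupp.mem_support_iff.mp hi) (ha1 i (by omega))
      set W : (ℕ →₀ ℝ) → (ℕ → X) → ℝ → Prop :=
        fun a γ c => c * ‖S1.Sm a u‖ < ‖S1.Sm a γ‖ with hW
      set B : ℕ × ℕ → List ℕ → X := fun p => (hbad p).choose with hB
      obtain ⟨z, hz, hzbad⟩ := S1.concat_exists B W
        (fun p => (hbad p).choose_spec.1)
        (fun p n' hn' => (hbad p).choose_spec.2 n' hn')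
        (fun a γ γ' c hagree hw => by
          show c * ‖S1.Sm a u‖ < ‖S1.Sm a γ'‖
          rw [← S1.Sm_congr hagree]
          exact hw)
        (fun a γ c c' hcc hw => by
          show c' * ‖S1.Sm a u‖ < ‖S1.Sm a γ‖
          have hx2 : c * ‖S1.Sm a u‖ < ‖S1.Sm a γ‖ := hw
          have := mul_le_mul_of_nonneg_right hcc (norm_nonneg (S1.Sm a u))
          linarith)
      obtain ⟨n, hn, c, hc1, hdom⟩ := (h z hz).2
      obtain ⟨a, haW⟩ := hzbad n hn c
      have haW' : c * ‖S1.Sm a u‖ < ‖S1.Sm a (TreeBranch z n)‖ := haW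
      have hdom' : ‖S1.Sm a (TreeBranch z n)‖ ≤ c * ‖S1.Sm a u‖ := hdom a
      linarith
  obtain ⟨Cl, hCl, hlow⟩ := lower
  obtain ⟨Cu, hCu, hup⟩ := upper
  refine ⟨max Cl Cu, le_trans hCl (le_max_left _ _), ?_, ?_⟩
  · intro x hx
    obtain ⟨n, hn, hD⟩ := hlow x hx
    refine ⟨n, hn, S1.dominates_mono (le_max_left _ _) ?_⟩
    intro a
    exact hD a (fun i hi => absurd hi (Nat.not_lt_zero i))
  · intro x hx
    obtain ⟨n, hn, hD⟩ := hup x hx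
    refine ⟨n, hn, S1.dominates_mono (le_max_right _ _) ?_⟩
    intro a
    exact hD a (fun i hi => absurd hi (Nat.not_lt_zero i))
end

section
/- Let Z be a Banach space with an FDD (E_i) and let V be a Banach space with a normalized 1-unconditional basis (v_i). Then (E_i) satisfies V-lower estimates in Z if and only if (E_i^*) satisfies V^(*)-upper estimates in Z^(*) (with respect to the basis (v_i^*) of biorthogonal functionals). Moreover, if (E_i) is bimonotone in Z, then for any C ≥ 1, (E_i) satisfies C-V-lower estimates in Z if and only if (E_i^*) satisfies C-V^(*)-upper estimates in Z^(*). -/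
open Filter Topology
open scoped ENNReal

section Helpers

variable {Z V : Type*}
variable [NormedAddCommGroup Z] [NormedSpace ℝ Z]
variable [NormedAddCommGroup V] [NormedSpace ℝ V]

lemma FDD.proj_proj (F : FDD Z) (i j : ℕ) (z : Z) :
    F.proj i (F.proj j z) = if i = j then F.proj j z else 0 := by
  by_cases h : i = j
  · simp [h, F.proj_self j _ (F.mem_proj j z)]
  · simp [h, F.proj_other i j h _ (F.mem_proj j z)]

lemma FDD.projIco_apply (F : FDD Z) (a b : ℕ) (z : Z) :
    F.projIco a b z = ∑ i ∈ Finset.Ico a b, F.proj i z := by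
  simp [FDD.projIco, ContinuousLinearMap.sum_apply]

lemma FDD.proj_projIco (F : FDD Z) (a b i : ℕ) (z : Z) :
    F.proj i (F.projIco a b z) = if i ∈ Finset.Ico a b then F.proj i z else 0 := by
  rw [F.projIco_apply, map_sum]
  have : ∀ p ∈ Finset.Ico a b, F.proj i (F.proj p z) = if p = i then F.proj i z else 0 := by
    intro p _
    rw [F.proj_proj]
    by_cases h : i = p <;> simp [h, eq_comm]
  rw [Finset.sum_congr rfl this, Finset.sum_ite_eq' (Finset.Ico a b) i (fun _ => F.proj i z)]

lemma FDD.supp_projIco_subset (F : FDD Z) (a b : ℕ) (z : Z) :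
    F.supp (F.projIco a b z) ⊆ ↑(Finset.Ico a b) := by
  intro i hi
  simp only [FDD.supp, Set.mem_setOf_eq] at hi
  rw [F.proj_projIco] at hi
  by_cases h2 : i ∈ Finset.Ico a b
  · exact h2
  · simp [h2] at hi

lemma FDD.sum_proj_of_supp_subset (F : FDD Z) (z : Z) (s : Finset ℕ)
    (hz : F.supp z ⊆ ↑s) : ∑ i ∈ s, F.proj i z = z := by
  have hev : ∀ N, (s.sup id) + 1 ≤ N →
      (∑ n ∈ Finset.range N, F.proj n z) = ∑ i ∈ s, F.proj i z := by
    intro N hN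
    refine (Finset.sum_subset ?_ ?_).symm
    · intro i hi
      have : i ≤ s.sup id := Finset.le_sup (f := id) hi
      exact Finset.mem_range.2 (lt_of_le_of_lt this (by omega))
    · intro i _ hi
      by_contra h
      exact hi (hz h)
  have h1 : Filter.Tendsto (fun N => ∑ n ∈ Finset.range N, F.proj n z) atTop
      (nhds (∑ i ∈ s, F.proj i z)) := by
    refine Filter.Tendsto.congr' ?_ tendsto_const_nhds
    filter_upwards [Filter.eventually_ge_atTop ((s.sup id) + 1)] with N hN
    exact (hev N hN).symm
  exact tendsto_nhds_unique h1 (F.tendsto_partialSum z)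

lemma FDD.projIco_eq_self (F : FDD Z) (z : Z) (a b : ℕ)
    (hz : F.supp z ⊆ ↑(Finset.Ico a b)) : F.projIco a b z = z := by
  rw [F.projIco_apply]; exact F.sum_proj_of_supp_subset z _ hz

lemma FDD.eq_zero_of_proj_eq_zero (F : FDD Z) (z : Z) (h : ∀ i, F.proj i z = 0) : z = 0 := by
  have := F.sum_proj_of_supp_subset z ∅ (by intro i hi; exact absurd (h i) hi)
  simpa using this.symm

lemma FDD.supp_nonempty (F : FDD Z) (z : Z) (hz : z ≠ 0) : (F.supp z).Nonempty := by
  by_contra h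
  rw [Set.not_nonempty_iff_eq_empty] at h
  refine hz (F.eq_zero_of_proj_eq_zero z fun i => ?_)
  by_contra hi
  have : i ∈ F.supp z := hi
  simp [h] at this

lemma FDD.projIco_eq_zero (F : FDD Z) (z : Z) (a b : ℕ)
    (h : ∀ i ∈ Finset.Ico a b, F.proj i z = 0) : F.projIco a b z = 0 := by
  rw [F.projIco_apply]
  exact Finset.sum_eq_zero h

lemma FDD.eval_projIco (F : FDD Z) (g : StrongDual ℝ Z) (a b : ℕ)
    (hg : F.dualSupp g ⊆ ↑(Finset.Ico a b)) (z : Z) : g z = g (F.projIco a b z) := by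
  have hev : ∀ N, b ≤ N →
      g (∑ n ∈ Finset.range N, F.proj n z) = g (F.projIco a b z) := by
    intro N hN
    rw [map_sum, F.projIco_apply, map_sum]
    refine (Finset.sum_subset ?_ ?_).symm
    · intro i hi
      exact Finset.mem_range.2 (lt_of_lt_of_le (Finset.mem_Ico.1 hi).2 hN)
    · intro i _ hi
      have : i ∉ F.dualSupp g := fun h => hi (hg h)
      simp only [FDD.dualSupp, Set.mem_setOf_eq, not_not] at this
      calc g (F.proj i z) = (g.comp (F.proj i)) z := rfl
        _ = 0 := by rw [this]; rfl
  have h1 : Filter.Tendsto (fun N => g (∑ n ∈ Finset.range N, F.proj n z)) atTop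
      (nhds (g (F.projIco a b z))) := by
    refine Filter.Tendsto.congr' ?_ tendsto_const_nhds
    filter_upwards [Filter.eventually_ge_atTop b] with N hN
    exact (hev N hN).symm
  have h2 : Filter.Tendsto (fun N => g (∑ n ∈ Finset.range N, F.proj n z)) atTop
      (nhds (g z)) := (g.continuous.tendsto z).comp (F.tendsto_partialSum z)
  exact (tendsto_nhds_unique h2 h1)

lemma FDD.dualSupp_nonempty (F : FDD Z) (g : StrongDual ℝ Z) (hg : g ≠ 0) :
    (F.dualSupp g).Nonempty := by
  by_contra h
  rw [Set.not_nonempty_iff_eq_empty] at h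
  refine hg ?_
  ext z
  have := F.eval_projIco g 0 0 (by rw [h]; simp) z
  rw [this]
  have : F.projIco 0 0 z = 0 := by rw [F.projIco_apply]; simp
  simp [this]

lemma FDD.telescope (F : FDD Z) (m : ℕ → ℕ) (hm : Monotone m) (k : ℕ) (z : Z) :
    ∑ j ∈ Finset.range k, F.projIco (m j) (m (j + 1)) z = F.projIco (m 0) (m k) z := by
  induction k with
  | zero => simp [F.projIco_apply]
  | succ k ih =>
      rw [Finset.sum_range_succ, ih, F.projIco_apply, F.projIco_apply, F.projIco_apply,
        ← Finset.sum_Ico_consecutive _ (hm (Nat.zero_le k)) (hm (Nat.le_succ k))]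

lemma FDD.exists_K (F : FDD Z) [CompleteSpace Z] :
    ∃ K : ℝ, 1 ≤ K ∧ ∀ (a b : ℕ) (z : Z), ‖F.projIco a b z‖ ≤ K * ‖z‖ := by
  obtain ⟨C', hC'⟩ := banach_steinhaus (g := fun N : ℕ => ∑ n ∈ Finset.range N, F.proj n)
    (fun z => by
      have h : Filter.Tendsto (fun N => ‖(∑ n ∈ Finset.range N, F.proj n) z‖) atTop
          (nhds ‖z‖) := by
        have := (continuous_norm.tendsto z).comp (F.tendsto_partialSum z)
        refine this.congr fun N => ?_
        simp [ContinuousLinearMap.sum_apply]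
      obtain ⟨C, hC⟩ := h.bddAbove_range
      exact ⟨C, fun N => hC (Set.mem_range_self N)⟩)
  refine ⟨max (2 * C') 1, le_max_right _ _, fun a b z => ?_⟩
  rcases le_or_gt b a with hab | hab
  · have : F.projIco a b z = 0 := by
      rw [F.projIco_apply, Finset.Ico_eq_empty (by omega)]; simp
    rw [this, norm_zero]
    positivity
  · have hC0 : 0 ≤ C' := le_trans (norm_nonneg _) (hC' 0)
    have hsplit : F.projIco a b z =
        (∑ n ∈ Finset.range b, F.proj n) z - (∑ n ∈ Finset.range a, F.proj n) z := by
      rw [F.projIco_apply, ContinuousLinearMap.sum_apply, ContinuousLinearMap.sum_apply,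
        Finset.sum_Ico_eq_sub (fun i => F.proj i z) (le_of_lt hab)]
    calc ‖F.projIco a b z‖ ≤ ‖(∑ n ∈ Finset.range b, F.proj n) z‖
          + ‖(∑ n ∈ Finset.range a, F.proj n) z‖ := by rw [hsplit]; exact norm_sub_le _ _
      _ ≤ C' * ‖z‖ + C' * ‖z‖ := by
          gcongr
          · exact le_trans ((∑ n ∈ Finset.range b, F.proj n).le_opNorm z)
              (by gcongr; exact hC' b)
          · exact le_trans ((∑ n ∈ Finset.range a, F.proj n).le_opNorm z)
              (by gcongr; exact hC' a)
      _ = (2 * C') * ‖z‖ := by ring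
      _ ≤ max (2 * C') 1 * ‖z‖ := by gcongr; exact le_max_left _ _

end Helpers
section VSide

variable {V : Type*} [NormedAddCommGroup V] [NormedSpace ℝ V]
variable {v : ℕ → V} {vStar : ℕ → StrongDual ℝ V}

lemma partial_norm_le (hunc : SeqUncond v) (c : ℕ →₀ ℝ) (s : Finset ℕ) :
    ‖∑ j ∈ s, c j • v j‖ ≤ ‖c.sum fun i r => r • v i‖ := by
  set t := s ∪ c.support with ht
  have h1 : (c.sum fun i r => r • v i) = ∑ j ∈ t, c j • v j := by
    rw [Finsupp.sum]
    refine Finset.sum_subset Finset.subset_union_right ?_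
    intro i _ hi
    rw [Finsupp.notMem_support_iff.1 hi, zero_smul]
  have h2 : ∑ j ∈ s, c j • v j
      = ∑ j ∈ t, ((if j ∈ s then (1:ℝ) else 0) * c j) • v j := by
    refine (Finset.sum_congr rfl fun j hj => by simp [hj]).trans
      (Finset.sum_subset Finset.subset_union_left fun i _ hi => by simp [hi])
  rw [h1, h2]
  exact hunc t c _ (fun i => by split <;> simp)

lemma vStar_apply (hbi : ∀ i j, vStar i (v j) = if i = j then (1:ℝ) else 0)
    (j : ℕ) (c : ℕ →₀ ℝ) : vStar j (c.sum fun i r => r • v i) = c j := by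
  rw [map_finsuppSum, Finsupp.sum]
  have : ∀ i ∈ c.support, vStar j (c i • v i) = if j = i then c i else 0 := by
    intro i _
    rw [map_smul, hbi j i]
    split <;> simp
  rw [Finset.sum_congr rfl this, Finset.sum_ite_eq]
  by_cases h : j ∈ c.support
  · rw [if_pos h]
  · rw [if_neg h, Finsupp.notMem_support_iff.1 h]

lemma sum_vStar_apply (hbi : ∀ i j, vStar i (v j) = if i = j then (1:ℝ) else 0)
    (s : Finset ℕ) (r : ℕ → ℝ) (c : ℕ →₀ ℝ) :
    (∑ j ∈ s, r j • vStar j) (c.sum fun i a => a • v i) = ∑ j ∈ s, r j * c j := by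
  rw [ContinuousLinearMap.sum_apply]
  exact Finset.sum_congr rfl fun j _ => by
    rw [ContinuousLinearMap.smul_apply, vStar_apply hbi, smul_eq_mul]

lemma opNorm_le_of_total (htot : SeqTotal v) (T : StrongDual ℝ V) (M : ℝ) (hM : 0 ≤ M)
    (h : ∀ c : ℕ →₀ ℝ, |T (c.sum fun i r => r • v i)| ≤ M * ‖c.sum fun i r => r • v i‖) :
    ‖T‖ ≤ M := by
  refine ContinuousLinearMap.opNorm_le_bound T hM fun y => ?_
  have hclosed : IsClosed {y : V | ‖T y‖ ≤ M * ‖y‖} :=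
    isClosed_le (continuous_norm.comp T.continuous) (continuous_const.mul continuous_norm)
  have hsub : (Submodule.span ℝ (Set.range v) : Set V) ⊆ {y : V | ‖T y‖ ≤ M * ‖y‖} := by
    intro x hx
    obtain ⟨c, hc⟩ := Finsupp.mem_span_range_iff_exists_finsupp.1 hx
    have := h c
    rw [hc] at this
    simpa [Real.norm_eq_abs] using this
  have hy : y ∈ closure (Submodule.span ℝ (Set.range v) : Set V) := by
    have h2 : ((Submodule.span ℝ (Set.range v)).topologicalClosure : Set V) = Set.univ := by
      rw [htot]; rfl
    rw [Submodule.topologicalClosure_coe] at h2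
    rw [h2]; trivial
  exact (hclosed.closure_subset_iff.2 hsub) hy

lemma dual_uncond (hunc : SeqUncond v)
    (hbi : ∀ i j, vStar i (v j) = if i = j then (1:ℝ) else 0) (htot : SeqTotal v)
    (s : Finset ℕ) (c ε : ℕ → ℝ) (hε : ∀ j, |ε j| ≤ 1) :
    ‖∑ j ∈ s, (ε j * c j) • vStar j‖ ≤ ‖∑ j ∈ s, c j • vStar j‖ := by
  refine opNorm_le_of_total htot _ _ (norm_nonneg _) fun c' => ?_
  rw [sum_vStar_apply hbi]
  set d : ℕ →₀ ℝ := Finsupp.onFinset c'.support (fun j => ε j * c' j)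
    (fun j h => Finsupp.mem_support_iff.2 fun h0 =>
      h (show ε j * c' j = 0 by rw [h0, mul_zero])) with hdd
  have hd : ∀ j, d j = ε j * c' j := fun j => rfl
  have key : ∑ j ∈ s, (ε j * c j) * c' j
      = (∑ j ∈ s, c j • vStar j) (d.sum fun i a => a • v i) := by
    rw [sum_vStar_apply hbi]
    refine Finset.sum_congr rfl fun j _ => ?_
    show (ε j * c j) * c' j = c j * (ε j * c' j)
    ring
  have hdnorm : ‖d.sum fun i a => a • v i‖ ≤ ‖c'.sum fun i a => a • v i‖ := by
    have h1 : (d.sum fun i a => a • v i) = ∑ j ∈ c'.support, (ε j * c' j) • v j :=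
      (Finsupp.sum_of_support_subset d Finsupp.support_onFinset_subset _
        (fun i _ => by rw [zero_smul])).trans (Finset.sum_congr rfl fun j _ => rfl)
    have h2 : (c'.sum fun i a => a • v i) = ∑ j ∈ c'.support, c' j • v j := rfl
    rw [h1, h2]
    exact hunc c'.support c' ε hε
  rw [key]
  calc |(∑ j ∈ s, c j • vStar j) (d.sum fun i a => a • v i)|
      ≤ ‖∑ j ∈ s, c j • vStar j‖ * ‖d.sum fun i a => a • v i‖ := by
        rw [← Real.norm_eq_abs]
        exact ContinuousLinearMap.le_opNorm _ _
    _ ≤ ‖∑ j ∈ s, c j • vStar j‖ * ‖c'.sum fun i a => a • v i‖ := by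
        gcongr

lemma restr_norm_le (hunc : SeqUncond v)
    (hbi : ∀ i j, vStar i (v j) = if i = j then (1:ℝ) else 0) (htot : SeqTotal v)
    (f : StrongDual ℝ V) (s : Finset ℕ) :
    ‖∑ j ∈ s, f (v j) • vStar j‖ ≤ ‖f‖ := by
  refine opNorm_le_of_total htot _ _ (norm_nonneg f) fun c => ?_
  rw [sum_vStar_apply hbi]
  have h1 : ∑ j ∈ s, f (v j) * c j = f (∑ j ∈ s, c j • v j) := by
    rw [map_sum]
    exact Finset.sum_congr rfl fun j _ => by rw [map_smul, smul_eq_mul, mul_comm]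
  rw [h1]
  calc |f (∑ j ∈ s, c j • v j)| ≤ ‖f‖ * ‖∑ j ∈ s, c j • v j‖ := by
        rw [← Real.norm_eq_abs]
        exact f.le_opNorm _
    _ ≤ ‖f‖ * ‖c.sum fun i r => r • v i‖ := by
        gcongr
        exact partial_norm_le hunc c s

end VSide

section BlockOrder

variable {Z : Type*} [NormedAddCommGroup Z] [NormedSpace ℝ Z]

lemma FDD.blockLt (F : FDD Z) {z : ℕ → Z} (hz : F.IsBlockSeq z) :
    ∀ i j, i < j → ∀ p ∈ F.supp (z i), ∀ q ∈ F.supp (z j), p < q := by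
  intro i j hij
  induction j with
  | zero => omega
  | succ j ih =>
      intro p hp q hq
      rcases Nat.lt_succ_iff_lt_or_eq.1 hij with h | h
      · obtain ⟨r, hr⟩ := F.supp_nonempty (z j) (hz.1 j).1
        exact lt_trans (ih h p hp r hr) (hz.2 j r hr q hq)
      · rw [h] at hp
        exact hz.2 j p hp q hq

lemma FDD.dualBlockLt (F : FDD Z) {g : ℕ → StrongDual ℝ Z} (hg : F.IsDualBlockSeq g) :
    ∀ i j, i < j → ∀ p ∈ F.dualSupp (g i), ∀ q ∈ F.dualSupp (g j), p < q := by
  intro i j hij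
  induction j with
  | zero => omega
  | succ j ih =>
      intro p hp q hq
      rcases Nat.lt_succ_iff_lt_or_eq.1 hij with h | h
      · obtain ⟨r, hr⟩ := F.dualSupp_nonempty (g j) (hg.1 j).1
        exact lt_trans (ih h p hp r hr) (hg.2 j r hr q hq)
      · rw [h] at hp
        exact hg.2 j p hp q hq

end BlockOrder
section MainLemmas

variable {Z V : Type*} [NormedAddCommGroup Z] [NormedSpace ℝ Z]
variable [NormedAddCommGroup V] [NormedSpace ℝ V]

lemma FDD.supp_smul_subset (F : FDD Z) (c : ℝ) (x : Z) : F.supp (c • x) ⊆ F.supp x := by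
  intro i hi
  simp only [FDD.supp, Set.mem_setOf_eq] at hi ⊢
  intro h
  rw [map_smul, h, smul_zero] at hi
  exact hi rfl

lemma FDD.projIco_proj (F : FDD Z) (a b i : ℕ) (x : Z) :
    F.projIco a b (F.proj i x) = if i ∈ Finset.Ico a b then F.proj i x else 0 := by
  rw [F.projIco_apply]
  have : ∀ p ∈ Finset.Ico a b, F.proj p (F.proj i x) = if p = i then F.proj i x else 0 := by
    intro p _
    rw [F.proj_proj]
  rw [Finset.sum_congr rfl this, Finset.sum_ite_eq' (Finset.Ico a b) i (fun _ => F.proj i x)]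

/-- The left endpoints of consecutive intervals with right endpoints `M j + 1`. -/
def consecLo (M : ℕ → ℕ) : ℕ → ℕ
  | 0 => 0
  | j + 1 => M j + 1

lemma fwd_main {F : FDD Z} {v : ℕ → V} {vStar : ℕ → StrongDual ℝ V}
    (hv : Is1UncondBasis v)
    (hbi : ∀ i j, vStar i (v j) = if i = j then (1 : ℝ) else 0)
    {K C : ℝ} (hK1 : 1 ≤ K) (hKb : ∀ (a b : ℕ) (x : Z), ‖F.projIco a b x‖ ≤ K * ‖x‖)
    (hC : 1 ≤ C) (hL : F.LowerEst C v) :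
    ∀ g : ℕ → StrongDual ℝ Z, F.IsDualBlockSeq g → (∀ j, ‖g j‖ = 1) →
      Dominates (C * K) vStar g := by
  classical
  obtain ⟨hnorm, hunc, htot⟩ := hv
  intro g hg hgn a
  have hfin : ∀ j, (F.dualSupp (g j)).Finite := fun j => (hg.1 j).2
  have hsne : ∀ j, ((hfin j).toFinset).Nonempty :=
    fun j => (Set.Finite.toFinset_nonempty _).2 (F.dualSupp_nonempty _ (hg.1 j).1)
  set M : ℕ → ℕ := fun j => ((hfin j).toFinset).max' (hsne j) with hMdef
  set m : ℕ → ℕ := consecLo M with hmdef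
  have hmem : ∀ j, M j ∈ F.dualSupp (g j) := fun j => by
    have := ((hfin j).toFinset).max'_mem (hsne j)
    rwa [Set.Finite.mem_toFinset] at this
  have hsupp : ∀ j, F.dualSupp (g j) ⊆ ↑(Finset.Ico (m j) (m (j + 1))) := by
    intro j i hi
    simp only [Finset.coe_Ico, Set.mem_Ico]
    constructor
    · cases j with
      | zero => exact Nat.zero_le i
      | succ p =>
          show M p + 1 ≤ i
          exact Nat.succ_le_of_lt (hg.2 p (M p) (hmem p) i hi)
    · show i < M j + 1
      exact Nat.lt_succ_of_le (Finset.le_max' _ i ((Set.Finite.mem_toFinset _).2 hi))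
  have hmono : Monotone m := by
    refine monotone_nat_of_le_succ fun j => ?_
    cases j with
    | zero => exact Nat.zero_le _
    | succ p =>
        have := hsupp (p + 1) (hmem (p + 1))
        simp only [Finset.coe_Ico, Set.mem_Ico] at this
        show M p + 1 ≤ M (p + 1) + 1
        have h2 : m (p + 1) ≤ M (p + 1) := this.1
        have h3 : m (p + 1) = M p + 1 := rfl
        omega
  -- filler vectors
  have hfill : ∀ j, ∃ e : Z, ‖e‖ = 1 ∧ F.supp e ⊆ ↑(Finset.Ico (m j) (m (j + 1))) := by
    intro j
    have hne : (g j).comp (F.proj (M j)) ≠ 0 := hmem j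
    obtain ⟨y, hy⟩ : ∃ y, F.proj (M j) y ≠ 0 := by
      by_contra hcon
      push_neg at hcon
      refine hne (ContinuousLinearMap.ext fun y => ?_)
      simp [ContinuousLinearMap.comp_apply, hcon y]
    refine ⟨‖F.proj (M j) y‖⁻¹ • F.proj (M j) y, ?_, ?_⟩
    · rw [norm_smul, norm_inv, norm_norm, inv_mul_cancel₀ (norm_ne_zero_iff.2 hy)]
    · intro i hi
      have hi2 := F.supp_smul_subset _ _ hi
      have hieq : i = M j := by
        by_contra hne2
        simp only [FDD.supp, Set.mem_setOf_eq] at hi2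
        exact hi2 (by rw [F.proj_proj, if_neg hne2])
      rw [hieq]
      exact hsupp j (hmem j)
  choose e he1 he2 using hfill
  refine ContinuousLinearMap.opNorm_le_bound _
    (mul_nonneg (mul_nonneg (by linarith) (by linarith)) (norm_nonneg _)) fun z => ?_
  -- the blocking of z
  set cz : ℕ → ℝ := fun j => ‖F.projIco (m j) (m (j + 1)) z‖ with hczdef
  set w : ℕ → Z := fun j => if h : F.projIco (m j) (m (j + 1)) z = 0 then e j
    else ‖F.projIco (m j) (m (j + 1)) z‖⁻¹ • F.projIco (m j) (m (j + 1)) z with hwdef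
  have hwn : ∀ j, ‖w j‖ = 1 := by
    intro j
    by_cases h : F.projIco (m j) (m (j + 1)) z = 0
    · rw [hwdef]
      simp only [dif_pos h]
      exact he1 j
    · rw [hwdef]
      simp only [dif_neg h]
      rw [norm_smul, norm_inv, norm_norm, inv_mul_cancel₀ (norm_ne_zero_iff.2 h)]
  have hwsupp : ∀ j, F.supp (w j) ⊆ ↑(Finset.Ico (m j) (m (j + 1))) := by
    intro j
    by_cases h : F.projIco (m j) (m (j + 1)) z = 0
    · rw [hwdef]
      simp only [dif_pos h]
      exact he2 j
    · rw [hwdef]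
      simp only [dif_neg h]
      exact (F.supp_smul_subset _ _).trans (F.supp_projIco_subset _ _ _)
  have hwblock : F.IsBlockSeq w := by
    constructor
    · intro j
      refine ⟨norm_ne_zero_iff.1 (by rw [hwn j]; exact one_ne_zero), ?_⟩
      exact Set.Finite.subset (Finset.Ico _ _).finite_toSet (hwsupp j)
    · intro j i hi i' hi'
      have h1 := hwsupp j hi
      have h2 := hwsupp (j + 1) hi'
      simp only [Finset.coe_Ico, Set.mem_Ico] at h1 h2
      exact lt_of_lt_of_le h1.2 h2.1
  have hdom := hL w hwblock hwn
  set N : ℕ := a.support.sup id + 1 with hN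
  have haN : ∀ j ∈ a.support, j < N := fun j hj =>
    Nat.lt_succ_of_le (Finset.le_sup (f := id) hj)
  set cc : ℕ →₀ ℝ := Finsupp.onFinset (Finset.range N) (fun j => if j < N then cz j else 0)
    (fun j hj => Finset.mem_range.2 (by by_contra hn; exact hj (if_neg hn))) with hccdef
  have hccw : (cc.sum fun i r => r • w i) = F.projIco (m 0) (m N) z := by
    rw [Finsupp.sum_of_support_subset cc Finsupp.support_onFinset_subset
      (fun i r => r • w i) (fun i _ => zero_smul ℝ (w i)), ← F.telescope m hmono N z]
    refine Finset.sum_congr rfl fun j hj => ?_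
    have hjN : j < N := Finset.mem_range.1 hj
    show (if j < N then cz j else 0) • w j = _
    rw [if_pos hjN]
    by_cases h : F.projIco (m j) (m (j + 1)) z = 0
    · have hcz0 : cz j = 0 := by rw [hczdef]; simp [h]
      rw [hcz0, zero_smul, h]
    · rw [hwdef]
      simp only [dif_neg h]
      rw [hczdef]
      simp only []
      rw [smul_smul, mul_inv_cancel₀ (norm_ne_zero_iff.2 h), one_smul]
  have hccv : ‖cc.sum fun i r => r • v i‖ ≤ C * (K * ‖z‖) := by
    refine (hdom cc).trans ?_
    rw [hccw]
    exact mul_le_mul_of_nonneg_left (hKb _ _ _) (by linarith)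
  set ε : ℕ → ℝ := fun j => if a j < 0 then -1 else 1 with hεdef
  have hε1 : ∀ j, |ε j| ≤ 1 := fun j => by
    show |if a j < 0 then (-1 : ℝ) else 1| ≤ 1
    split <;> simp
  set d : ℕ →₀ ℝ := Finsupp.onFinset (Finset.range N) (fun j => if j < N then ε j * cz j else 0)
    (fun j hj => Finset.mem_range.2 (by by_contra hn; exact hj (if_neg hn))) with hddef
  have heval : (∑ j ∈ a.support, a j • vStar j) (d.sum fun i r => r • v i)
      = ∑ j ∈ a.support, |a j| * cz j := by
    rw [sum_vStar_apply hbi]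
    refine Finset.sum_congr rfl fun j hj => ?_
    have hdj : d j = ε j * cz j := by
      show (if j < N then ε j * cz j else 0) = ε j * cz j
      rw [if_pos (haN j hj)]
    rw [hdj]
    show a j * ((if a j < 0 then (-1:ℝ) else 1) * cz j) = |a j| * cz j
    by_cases h : a j < 0
    · rw [if_pos h, abs_of_neg h]; ring
    · rw [if_neg h, abs_of_nonneg (not_lt.1 h)]; ring
  have hdv : ‖d.sum fun i r => r • v i‖ ≤ ‖cc.sum fun i r => r • v i‖ := by
    have h1 : (d.sum fun i r => r • v i) = ∑ j ∈ Finset.range N, (ε j * cz j) • v j := by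
      rw [Finsupp.sum_of_support_subset d Finsupp.support_onFinset_subset
        (fun i r => r • v i) (fun i _ => zero_smul ℝ (v i))]
      refine Finset.sum_congr rfl fun j hj => ?_
      have : d j = ε j * cz j := by
        show (if j < N then ε j * cz j else 0) = ε j * cz j
        rw [if_pos (Finset.mem_range.1 hj)]
      rw [this]
    have h2 : (cc.sum fun i r => r • v i) = ∑ j ∈ Finset.range N, cz j • v j := by
      rw [Finsupp.sum_of_support_subset cc Finsupp.support_onFinset_subset
        (fun i r => r • v i) (fun i _ => zero_smul ℝ (v i))]
      refine Finset.sum_congr rfl fun j hj => ?_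
      have : cc j = cz j := by
        show (if j < N then cz j else 0) = cz j
        rw [if_pos (Finset.mem_range.1 hj)]
      rw [this]
    rw [h1, h2]
    exact hunc (Finset.range N) cz ε hε1
  have happly : (a.sum fun j c => c • g j) z
      = ∑ j ∈ a.support, a j * g j (F.projIco (m j) (m (j + 1)) z) := by
    have hs : (a.sum fun j c => c • g j) = ∑ j ∈ a.support, a j • g j := rfl
    rw [hs, ContinuousLinearMap.sum_apply]
    refine Finset.sum_congr rfl fun j _ => ?_
    rw [ContinuousLinearMap.smul_apply, smul_eq_mul, ← F.eval_projIco (g j) _ _ (hsupp j)]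
  calc ‖(a.sum fun j c => c • g j) z‖
      = |∑ j ∈ a.support, a j * g j (F.projIco (m j) (m (j + 1)) z)| := by
        rw [happly, Real.norm_eq_abs]
    _ ≤ ∑ j ∈ a.support, |a j * g j (F.projIco (m j) (m (j + 1)) z)| :=
        Finset.abs_sum_le_sum_abs _ _
    _ ≤ ∑ j ∈ a.support, |a j| * cz j := by
        refine Finset.sum_le_sum fun j _ => ?_
        rw [abs_mul]
        refine mul_le_mul_of_nonneg_left ?_ (abs_nonneg _)
        calc |g j (F.projIco (m j) (m (j + 1)) z)|
            ≤ ‖g j‖ * ‖F.projIco (m j) (m (j + 1)) z‖ := by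
              rw [← Real.norm_eq_abs]
              exact ContinuousLinearMap.le_opNorm _ _
          _ = cz j := by rw [hgn j, one_mul]
    _ = (∑ j ∈ a.support, a j • vStar j) (d.sum fun i r => r • v i) := heval.symm
    _ ≤ ‖∑ j ∈ a.support, a j • vStar j‖ * ‖d.sum fun i r => r • v i‖ := by
        refine le_trans (le_abs_self _) ?_
        rw [← Real.norm_eq_abs]
        exact ContinuousLinearMap.le_opNorm _ _
    _ ≤ ‖a.sum fun j c => c • vStar j‖ * (C * (K * ‖z‖)) := by
        have hs : (a.sum fun j c => c • vStar j) = ∑ j ∈ a.support, a j • vStar j := rfl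
        rw [hs]
        exact mul_le_mul_of_nonneg_left (hdv.trans hccv) (norm_nonneg _)
    _ = C * K * ‖a.sum fun j c => c • vStar j‖ * ‖z‖ := by ring

lemma bwd_main {F : FDD Z} {v : ℕ → V} {vStar : ℕ → StrongDual ℝ V}
    (hv : Is1UncondBasis v)
    (hbi : ∀ i j, vStar i (v j) = if i = j then (1 : ℝ) else 0)
    {K C : ℝ} (hK1 : 1 ≤ K) (hKb : ∀ (a b : ℕ) (x : Z), ‖F.projIco a b x‖ ≤ K * ‖x‖)
    (hC : 1 ≤ C)
    (hD : ∀ g : ℕ → StrongDual ℝ Z, F.IsDualBlockSeq g → (∀ j, ‖g j‖ = 1) →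
      Dominates C vStar g) :
    F.LowerEst (C * K) v := by
  classical
  obtain ⟨hnorm, hunc, htot⟩ := hv
  intro z hz hzn a
  by_cases hx : (a.sum fun i c => c • v i) = 0
  · rw [hx, norm_zero]
    exact mul_nonneg (mul_nonneg (by linarith) (by linarith)) (norm_nonneg _)
  have hne : ∀ j, ((hz.1 j).2.toFinset).Nonempty :=
    fun j => (Set.Finite.toFinset_nonempty _).2 (F.supp_nonempty _ (hz.1 j).1)
  set m : ℕ → ℕ := fun j => ((hz.1 j).2.toFinset).min' (hne j) with hmdef
  set M : ℕ → ℕ := fun j => ((hz.1 j).2.toFinset).max' (hne j) with hMdef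
  have hmm : ∀ j, m j ∈ F.supp (z j) := fun j => by
    have := ((hz.1 j).2.toFinset).min'_mem (hne j)
    rwa [Set.Finite.mem_toFinset] at this
  have hMM : ∀ j, M j ∈ F.supp (z j) := fun j => by
    have := ((hz.1 j).2.toFinset).max'_mem (hne j)
    rwa [Set.Finite.mem_toFinset] at this
  have hsupp : ∀ j, F.supp (z j) ⊆ ↑(Finset.Ico (m j) (M j + 1)) := by
    intro j i hi
    simp only [Finset.coe_Ico, Set.mem_Ico]
    exact ⟨Finset.min'_le _ i ((Set.Finite.mem_toFinset _).2 hi),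
      Nat.lt_succ_of_le (Finset.le_max' _ i ((Set.Finite.mem_toFinset _).2 hi))⟩
  choose zs hzs1 hzs2 using fun j => exists_dual_vector ℝ (z j) (norm_ne_zero_iff.2 (hz.1 j).1)
  set g : ℕ → StrongDual ℝ Z := fun j => (zs j).comp (F.projIco (m j) (M j + 1))
    with hgdef
  have hgz : ∀ j i, g j (z i) = if j = i then 1 else 0 := by
    intro j i
    by_cases h : j = i
    · subst h
      rw [if_pos rfl]
      show zs j (F.projIco (m j) (M j + 1) (z j)) = 1
      rw [F.projIco_eq_self _ _ _ (hsupp j), hzs2 j, hzn j]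
      norm_cast
    · rw [if_neg h]
      show zs j (F.projIco (m j) (M j + 1) (z i)) = 0
      have hzero : F.projIco (m j) (M j + 1) (z i) = 0 := by
        apply F.projIco_eq_zero
        intro q hq
        rw [Finset.mem_Ico] at hq
        by_contra hq0
        have hqmem : q ∈ F.supp (z i) := hq0
        rcases lt_or_gt_of_ne h with hji | hij
        · have := F.blockLt hz j i hji (M j) (hMM j) q hqmem
          omega
        · have := F.blockLt hz i j hij q hqmem (m j) (hmm j)
          omega
      rw [hzero, map_zero]
  have hgK : ∀ j, ‖g j‖ ≤ K := by
    intro j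
    refine ContinuousLinearMap.opNorm_le_bound _ (by linarith) fun x => ?_
    calc ‖zs j (F.projIco (m j) (M j + 1) x)‖
        ≤ ‖zs j‖ * ‖F.projIco (m j) (M j + 1) x‖ := ContinuousLinearMap.le_opNorm _ _
      _ = ‖F.projIco (m j) (M j + 1) x‖ := by rw [hzs1 j, one_mul]
      _ ≤ K * ‖x‖ := hKb _ _ _
  have hg1 : ∀ j, 1 ≤ ‖g j‖ := by
    intro j
    have h1 : g j (z j) = 1 := by
      have := hgz j j
      rwa [if_pos rfl] at this
    have h2 := (g j).le_opNorm (z j)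
    rw [h1, hzn j, mul_one, norm_one] at h2
    exact h2
  have hgne : ∀ j, ‖g j‖ ≠ 0 := fun j => by have := hg1 j; linarith
  set h : ℕ → StrongDual ℝ Z := fun j => ‖g j‖⁻¹ • g j with hhdef
  have hhn : ∀ j, ‖h j‖ = 1 := fun j => by
    show ‖‖g j‖⁻¹ • g j‖ = 1
    rw [norm_smul, norm_inv, norm_norm, inv_mul_cancel₀ (hgne j)]
  have hhsupp : ∀ j, F.dualSupp (h j) ⊆ ↑(Finset.Ico (m j) (M j + 1)) := by
    intro j i hi
    by_contra hni
    apply hi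
    show (h j).comp (F.proj i) = 0
    ext x
    show h j (F.proj i x) = 0
    show (‖g j‖⁻¹ • g j) (F.proj i x) = 0
    rw [ContinuousLinearMap.smul_apply]
    have : g j (F.proj i x) = 0 := by
      show zs j (F.projIco (m j) (M j + 1) (F.proj i x)) = 0
      rw [F.projIco_proj, if_neg (by simpa using hni), map_zero]
    rw [this, smul_zero]
  have hhblock : F.IsDualBlockSeq h := by
    constructor
    · intro j
      refine ⟨norm_ne_zero_iff.1 (by rw [hhn j]; exact one_ne_zero), ?_⟩
      exact Set.Finite.subset (Finset.Ico _ _).finite_toSet (hhsupp j)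
    · intro j p hp q hq
      have h1 := hhsupp j hp
      have h2 := hhsupp (j + 1) hq
      simp only [Finset.coe_Ico, Set.mem_Ico] at h1 h2
      have hMm : M j < m (j + 1) := hz.2 j (M j) (hMM j) (m (j + 1)) (hmm (j + 1))
      omega
  have hdom := hD h hhblock hhn
  obtain ⟨f, hf1, hf2⟩ := exists_dual_vector ℝ _ (norm_ne_zero_iff.2 hx)
  set b : ℕ →₀ ℝ := Finsupp.onFinset a.support
    (fun j => if j ∈ a.support then f (v j) * ‖g j‖ else 0)
    (fun j hj => by by_contra hn; exact hj (if_neg hn)) with hbdef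
  have hbsum : (b.sum fun j r => r • h j) = ∑ j ∈ a.support, b j • h j :=
    Finsupp.sum_of_support_subset b Finsupp.support_onFinset_subset
      (fun j r => r • h j) (fun i _ => zero_smul ℝ (h i))
  have hkey : (b.sum fun j r => r • h j) (a.sum fun i c => c • z i)
      = ∑ j ∈ a.support, a j * f (v j) := by
    rw [hbsum, ContinuousLinearMap.sum_apply]
    refine Finset.sum_congr rfl fun j hj => ?_
    have hbj : b j = f (v j) * ‖g j‖ := by
      show (if j ∈ a.support then f (v j) * ‖g j‖ else 0) = _
      rw [if_pos hj]
    have hha : h j (a.sum fun i c => c • z i) = a j * ‖g j‖⁻¹ := by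
      rw [map_finsuppSum, Finsupp.sum]
      have hterm : ∀ i ∈ a.support, h j (a i • z i)
          = if j = i then a i * ‖g j‖⁻¹ else 0 := by
        intro i _
        rw [map_smul]
        have : h j (z i) = ‖g j‖⁻¹ * g j (z i) := by
          show (‖g j‖⁻¹ • g j) (z i) = _
          rw [ContinuousLinearMap.smul_apply, smul_eq_mul]
        rw [this, hgz j i, smul_eq_mul]
        by_cases hji : j = i
        · rw [if_pos hji, if_pos hji]; ring
        · rw [if_neg hji, if_neg hji]; ring
      rw [Finset.sum_congr rfl hterm, Finset.sum_ite_eq]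
      by_cases hjs : j ∈ a.support
      · rw [if_pos hjs]
      · rw [if_neg hjs, Finsupp.notMem_support_iff.1 hjs, zero_mul]
    rw [ContinuousLinearMap.smul_apply, hha, hbj, smul_eq_mul]
    have : f (v j) * ‖g j‖ * (a j * ‖g j‖⁻¹)
        = a j * f (v j) * (‖g j‖ * ‖g j‖⁻¹) := by ring
    rw [this, mul_inv_cancel₀ (hgne j), mul_one]
  have hfx : f (a.sum fun i c => c • v i) = ∑ j ∈ a.support, a j * f (v j) := by
    rw [map_finsuppSum, Finsupp.sum]
    exact Finset.sum_congr rfl fun j _ => by rw [map_smul, smul_eq_mul]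
  have hK0 : (0:ℝ) < K := by linarith
  have hbv : ‖b.sum fun j r => r • vStar j‖ ≤ K := by
    have h1 : (b.sum fun j r => r • vStar j)
        = ∑ j ∈ a.support, ((‖g j‖ / K) * (K * f (v j))) • vStar j := by
      rw [Finsupp.sum_of_support_subset b Finsupp.support_onFinset_subset
        (fun j r => r • vStar j) (fun i _ => zero_smul ℝ (vStar i))]
      refine Finset.sum_congr rfl fun j hj => ?_
      have hbj : b j = f (v j) * ‖g j‖ := by
        show (if j ∈ a.support then f (v j) * ‖g j‖ else 0) = _
        rw [if_pos hj]
      rw [hbj]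
      congr 1
      field_simp
    rw [h1]
    calc ‖∑ j ∈ a.support, ((‖g j‖ / K) * (K * f (v j))) • vStar j‖
        ≤ ‖∑ j ∈ a.support, (K * f (v j)) • vStar j‖ := by
          refine dual_uncond hunc hbi htot a.support _ _ fun j => ?_
          rw [abs_of_nonneg (div_nonneg (norm_nonneg _) (le_of_lt hK0))]
          rw [div_le_one hK0]
          exact hgK j
      _ = ‖K • ∑ j ∈ a.support, f (v j) • vStar j‖ := by
          rw [Finset.smul_sum]
          congr 1
          exact Finset.sum_congr rfl fun j _ => by rw [smul_smul]
      _ = |K| * ‖∑ j ∈ a.support, f (v j) • vStar j‖ := by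
          rw [norm_smul, Real.norm_eq_abs]
      _ ≤ K * 1 := by
          rw [abs_of_pos hK0]
          exact mul_le_mul_of_nonneg_left
            (le_trans (restr_norm_le hunc hbi htot f a.support) (le_of_eq hf1))
            (le_of_lt hK0)
      _ = K := mul_one K
  calc ‖a.sum fun i c => c • v i‖
      = f (a.sum fun i c => c • v i) := by exact_mod_cast hf2.symm
    _ = (b.sum fun j r => r • h j) (a.sum fun i c => c • z i) := hfx.trans hkey.symm
    _ ≤ ‖b.sum fun j r => r • h j‖ * ‖a.sum fun i c => c • z i‖ := by
        refine le_trans (le_abs_self _) ?_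
        rw [← Real.norm_eq_abs]
        exact ContinuousLinearMap.le_opNorm _ _
    _ ≤ C * K * ‖a.sum fun i c => c • z i‖ := by
        refine mul_le_mul_of_nonneg_right ?_ (norm_nonneg _)
        calc ‖b.sum fun j r => r • h j‖
            ≤ C * ‖b.sum fun j r => r • vStar j‖ := hdom b
          _ ≤ C * K := mul_le_mul_of_nonneg_left hbv (by linarith)

end MainLemmas

/-- `(E_i)` satisfies `V`-lower estimates in `Z` iff `(E_i^*)` satisfies
`V^(*)`-upper estimates in `Z^(*)`; moreover for bimonotone FDDs this holds constant by
constant. -/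
theorem statement2 {Z V : Type*}
    [NormedAddCommGroup Z] [NormedSpace ℝ Z] [CompleteSpace Z]
    [NormedAddCommGroup V] [NormedSpace ℝ V] [CompleteSpace V]
    (F : FDD Z) (v : ℕ → V) (hv : Is1UncondBasis v)
    (vStar : ℕ → StrongDual ℝ V)
    (hbi : ∀ i j, vStar i (v j) = if i = j then (1 : ℝ) else 0) :
    ((∃ C : ℝ, 1 ≤ C ∧ F.LowerEst C v) ↔
      (∃ C : ℝ, 1 ≤ C ∧ ∀ g : ℕ → StrongDual ℝ Z, F.IsDualBlockSeq g →
        (∀ j, ‖g j‖ = 1) → Dominates C vStar g)) ∧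
    (F.Bimonotone → ∀ C : ℝ, 1 ≤ C →
      (F.LowerEst C v ↔
        ∀ g : ℕ → StrongDual ℝ Z, F.IsDualBlockSeq g →
          (∀ j, ‖g j‖ = 1) → Dominates C vStar g)) := by
  obtain ⟨K, hK1, hKb⟩ := F.exists_K
  constructor
  · constructor
    · rintro ⟨C, hC, hL⟩
      exact ⟨C * K, by nlinarith, fwd_main hv hbi hK1 hKb hC hL⟩
    · rintro ⟨C, hC, hD⟩
      exact ⟨C * K, by nlinarith, bwd_main hv hbi hK1 hKb hC hD⟩
  · intro hbim C hC
    have hKb1 : ∀ (a b : ℕ) (x : Z), ‖F.projIco a b x‖ ≤ 1 * ‖x‖ := fun a b x => by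
      rw [one_mul]; exact hbim a b x
    constructor
    · intro hL
      have := fwd_main hv hbi le_rfl hKb1 hC hL
      simpa only [mul_one] using this
    · intro hD
      have := bwd_main hv hbi le_rfl hKb1 hC hD
      simpa only [mul_one] using this
end
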